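/- arXiv:1308.5490 — 6 statements merged into one kernel-verified Lean document; each statement's English description precedes it below -/
import Mathlib

section
/- If π and ρ are k-permutations of [n] with the same cycle type, then there exists a permutation σ of [n] such that σ∘π∘σ^{-1} restricted to [k] equals ρ, where σ maps [k] onto [k]. -/
attribute [local instance] Classical.propDecidable

def arrangementGraph (n k : ℕ) :
    SimpleGraph {π : Fin k → Fin n // Function.Injective π} where
  Adj π ρ := ∃! i, π.1 i ≠ ρ.1 i
  symm := by
    constructor
    rintro π ρ ⟨i, hi, hu⟩
    exact ⟨i, hi.symm, fun j hj => hu j hj.symm⟩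
  loopless := by constructor; rintro π ⟨i, hi, -⟩; exact hi rfl

/-- Extend a `k`-permutation `π : [k] → [n]` to a map `ℕ → ℕ` fixing everything
outside `{0,…,k-1}`, so that its dynamics encode the cycles and paths of `π`. -/
def extFun {n k : ℕ} (π : Fin k → Fin n) : ℕ → ℕ :=
  fun u => if h : u < k then (π ⟨u, h⟩ : ℕ) else u

/-- The number of elements of `[k]` lying on a cycle of length `i` of `π`. -/
noncomputable def cyclicCount {n k : ℕ} (π : Fin k → Fin n) (i : ℕ) : ℕ :=
  Nat.card {u : ℕ // u < k ∧ Function.minimalPeriod (extFun π) u = i}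

/-- The number of paths of length `i` in the cyclic decomposition of `π`. -/
noncomputable def pathCount {n k : ℕ} (π : Fin k → Fin n) (i : ℕ) : ℕ :=
  Nat.card {u : ℕ // u < k ∧ (∀ w, w < k → extFun π w ≠ u) ∧
    sInf {ℓ : ℕ | k ≤ (extFun π)^[ℓ] u} = i}

/-- Two `k`-permutations have the same cycle type iff for every `i` they have the same
number of cycles of length `i` and the same number of paths of length `i`. -/
def SameCycleType {n k : ℕ} (π ρ : Fin k → Fin n) : Prop :=
  ∀ i, cyclicCount π i = cyclicCount ρ i ∧ pathCount π i = pathCount ρ i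

namespace SCT

variable {n k : ℕ} (π : Fin k → Fin n)

/-- path length -/
noncomputable def len (u : ℕ) : ℕ := sInf {ℓ : ℕ | k ≤ (extFun π)^[ℓ] u}

def Strt (u : ℕ) : Prop := u < k ∧ ∀ w, w < k → extFun π w ≠ u

def CStrt (s : ℕ) : Prop :=
  s < k ∧ 0 < Function.minimalPeriod (extFun π) s ∧ ∀ j, s ≤ (extFun π)^[j] s

lemma ext_apply_lt {u : ℕ} (h : u < k) : extFun π u = (π ⟨u, h⟩ : ℕ) := dif_pos h

lemma ext_lt_n {u : ℕ} (h : u < k) : extFun π u < n := by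
  rw [ext_apply_lt π h]; exact (π ⟨u, h⟩).2

lemma ext_of_ge {u : ℕ} (h : k ≤ u) : extFun π u = u := dif_neg (not_lt.2 h)

variable {π}
variable (hπ : Function.Injective π)

include hπ in
lemma ext_inj {u v : ℕ} (hu : u < k) (hv : v < k) (h : extFun π u = extFun π v) :
    u = v := by
  rw [ext_apply_lt π hu, ext_apply_lt π hv] at h
  have := hπ (Fin.val_injective h)
  exact congrArg Fin.val this

variable (π) in
lemma iter_stab {u a : ℕ} (h : k ≤ (extFun π)^[a] u) (m : ℕ) :
    (extFun π)^[a + m] u = (extFun π)^[a] u := by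
  induction m with
  | zero => rfl
  | succ m ih =>
    rw [← Nat.add_assoc, Function.iterate_succ_apply', ih, ext_of_ge π (by omega)]

variable (π) in
lemma iter_stab' {u a b : ℕ} (h : k ≤ (extFun π)^[a] u) (hab : a ≤ b) :
    (extFun π)^[b] u = (extFun π)^[a] u := by
  obtain ⟨m, rfl⟩ := Nat.exists_eq_add_of_le hab
  exact iter_stab π h m

variable (π) in
/-- iterates of a periodic point below `k` stay below `k` -/
lemma cyc_iter_lt {u : ℕ} (hu : u < k)
    (hp : 0 < Function.minimalPeriod (extFun π) u) (j : ℕ) :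
    (extFun π)^[j] u < k := by
  by_contra hj
  push_neg at hj
  set p := Function.minimalPeriod (extFun π) u with hpdef
  have hper : (extFun π)^[p * (j + 1)] u = u := by
    have := (Function.isPeriodicPt_minimalPeriod (extFun π) u).mul_const (j + 1)
    exact this
  have hle : j ≤ p * (j + 1) := by nlinarith
  have := iter_stab' π hj hle
  rw [hper] at this
  omega

include hπ in
lemma iter_cancel {u v a : ℕ} (hu : ∀ i < a, (extFun π)^[i] u < k)
    (hv : ∀ i < a, (extFun π)^[i] v < k)
    (h : (extFun π)^[a] u = (extFun π)^[a] v) : u = v := by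
  induction a with
  | zero => exact h
  | succ a ih =>
    have h1 : (extFun π)^[a] u < k := hu a (by omega)
    have h2 : (extFun π)^[a] v < k := hv a (by omega)
    rw [Function.iterate_succ_apply', Function.iterate_succ_apply'] at h
    exact ih (fun i hi => hu i (by omega)) (fun i hi => hv i (by omega))
      (ext_inj hπ h1 h2 h)

include hπ in
lemma cyc_of_iter_lt {u : ℕ} (hu : u < k) (hall : ∀ j, (extFun π)^[j] u < k) :
    0 < Function.minimalPeriod (extFun π) u := by
  have hk : 0 < k := lt_of_le_of_lt (Nat.zero_le u) hu
  have key : ∀ a b : ℕ, a < b → (extFun π)^[a] u = (extFun π)^[b] u →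
      0 < Function.minimalPeriod (extFun π) u := by
    intro a b hlt hab
    have hkey : (extFun π)^[b - a] u = u := by
      have : (extFun π)^[a] ((extFun π)^[b - a] u) = (extFun π)^[a] u := by
        rw [← Function.iterate_add_apply, show a + (b - a) = b by omega]
        exact hab.symm
      exact iter_cancel hπ (fun i _ => by
          rw [← Function.iterate_add_apply]; exact hall _) (fun i _ => hall i) this
    have : Function.IsPeriodicPt (extFun π) (b - a) u := hkey
    exact this.minimalPeriod_pos (by omega)
  have : ¬ Function.Injective (fun i : Fin (k + 1) => (⟨(extFun π)^[i] u, hall i⟩ : Fin k)) := by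
    intro hinj
    have := Fintype.card_le_of_injective _ hinj
    simp at this
  rw [Function.not_injective_iff] at this
  obtain ⟨a, b, hab, hne⟩ := this
  simp only [Fin.mk.injEq] at hab
  rcases Nat.lt_or_ge (a : ℕ) (b : ℕ) with h | h
  · exact key a b h hab
  · have h' : (b : ℕ) < (a : ℕ) := by
      rcases Nat.lt_or_ge (b : ℕ) (a : ℕ) with h2 | h2
      · exact h2
      · exact absurd (Fin.ext (by omega)) hne
    exact key b a h' hab.symm

-- Path structure

variable (π) in
lemma exists_escape {u : ℕ} (hπ : Function.Injective π) (hu : u < k)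
    (hnc : ¬ 0 < Function.minimalPeriod (extFun π) u) :
    ∃ ℓ, k ≤ (extFun π)^[ℓ] u := by
  by_contra hc
  push_neg at hc
  exact hnc (cyc_of_iter_lt hπ hu hc)

variable (π) in
lemma len_spec {u : ℕ} (hex : ∃ ℓ, k ≤ (extFun π)^[ℓ] u) :
    k ≤ (extFun π)^[len π u] u :=
  Nat.sInf_mem hex

variable (π) in
lemma iter_lt_of_lt_len {u j : ℕ} (hj : j < len π u) : (extFun π)^[j] u < k := by
  by_contra hc
  push_neg at hc
  have : len π u ≤ j := Nat.sInf_le hc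
  omega

variable (π) in
lemma len_pos {u : ℕ} (hu : u < k) (hex : ∃ ℓ, k ≤ (extFun π)^[ℓ] u) :
    0 < len π u := by
  rcases Nat.eq_zero_or_pos (len π u) with h | h
  · have := len_spec π hex; rw [h] at this; simp at this; omega
  · exact h

variable (π) in
lemma per_iterate {u : ℕ} (hp : 0 < Function.minimalPeriod (extFun π) u) (j : ℕ) :
    Function.minimalPeriod (extFun π) ((extFun π)^[j] u)
      = Function.minimalPeriod (extFun π) u := by
  have hmem : u ∈ Function.periodicPts (extFun π) :=
    Function.minimalPeriod_pos_iff_mem_periodicPts.mp hp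
  exact Function.minimalPeriod_apply_iterate hmem j

include hπ in
lemma noncyc_step {u : ℕ} (hu : u < k)
    (hnc : ¬ 0 < Function.minimalPeriod (extFun π) u)
    (hfu : extFun π u < k) :
    ¬ 0 < Function.minimalPeriod (extFun π) (extFun π u) := by
  intro hp
  set v := extFun π u with hv
  set m := Function.minimalPeriod (extFun π) v with hm
  have hper : (extFun π)^[m] v = v := Function.iterate_minimalPeriod
  have hw : (extFun π) ((extFun π)^[m-1] v) = v := by
    rw [← Function.iterate_succ_apply' (extFun π) (m-1) v, show (m - 1).succ = m by omega, hper]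
  have hwlt : (extFun π)^[m-1] v < k := cyc_iter_lt π hfu hp _
  have : (extFun π)^[m-1] v = u := ext_inj hπ hwlt hu (by rw [hw])
  have hcu : 0 < Function.minimalPeriod (extFun π) u := by
    rw [← this]
    rw [per_iterate π hp (m-1)]
    exact hp
  exact hnc hcu

include hπ in
lemma noncyc_iter {u j : ℕ}
    (hnc : ¬ 0 < Function.minimalPeriod (extFun π) u)
    (hlt : ∀ i, i ≤ j → (extFun π)^[i] u < k) :
    ¬ 0 < Function.minimalPeriod (extFun π) ((extFun π)^[j] u) := by
  induction j with
  | zero => exact hnc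
  | succ j ih =>
    rw [Function.iterate_succ_apply']
    exact noncyc_step hπ (hlt j (by omega)) (ih (fun i hi => hlt i (by omega)))
      (by rw [← Function.iterate_succ_apply' (extFun π) j u]; exact hlt (j+1) le_rfl)

include hπ in
lemma exists_start {u : ℕ} (hu : u < k)
    (hnc : ¬ 0 < Function.minimalPeriod (extFun π) u) :
    ∃ s j, Strt π s ∧ ¬ 0 < Function.minimalPeriod (extFun π) s ∧
      j < len π s ∧ (extFun π)^[j] s = u := by
  set P : ℕ → Prop := fun j => ∃ s, s < k ∧ (extFun π)^[j] s = u with hP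
  -- iterates leading to u are all < k
  have hiterlt : ∀ j s, s < k → (extFun π)^[j] s = u → ∀ i, i ≤ j → (extFun π)^[i] s < k := by
    intro j s hs hj i hi
    by_contra hc
    push_neg at hc
    have := iter_stab' π hc hi
    rw [hj] at this
    omega
  -- source of a chain to u is non-cyclic
  have hsnc : ∀ j s, s < k → (extFun π)^[j] s = u →
      ¬ 0 < Function.minimalPeriod (extFun π) s := by
    intro j s hs hj hp
    apply hnc
    rw [← hj, per_iterate π hp j]
    exact hp
  have hbound : ∀ j, P j → j < k := by
    rintro j ⟨s, hs, hj⟩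
    have hall := hiterlt j s hs hj
    have hinj : Function.Injective
        (fun i : Fin (j + 1) => (⟨(extFun π)^[i] s, hall i (by omega)⟩ : Fin k)) := by
      intro a b hab
      simp only [Fin.mk.injEq] at hab
      by_contra hne
      have key : ∀ a b : Fin (j+1), (a:ℕ) < (b:ℕ) →
          (extFun π)^[(a:ℕ)] s = (extFun π)^[(b:ℕ)] s → False := by
        intro a b hlt hab
        have hkey : (extFun π)^[(b:ℕ) - (a:ℕ)] s = s := by
          have : (extFun π)^[(a:ℕ)] ((extFun π)^[(b:ℕ)-(a:ℕ)] s) = (extFun π)^[(a:ℕ)] s := by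
            rw [← Function.iterate_add_apply, show (a:ℕ) + ((b:ℕ) - (a:ℕ)) = (b:ℕ) by omega]
            exact hab.symm
          refine iter_cancel hπ (fun i hi => ?_) (fun i hi => hall i (by omega)) this
          rw [← Function.iterate_add_apply]
          exact hall _ (by omega)
        have hpp : Function.IsPeriodicPt (extFun π) ((b:ℕ)-(a:ℕ)) s := hkey
        exact hsnc j s hs hj (hpp.minimalPeriod_pos (by omega))
      rcases Nat.lt_or_ge (a : ℕ) (b : ℕ) with h | h
      · exact key a b h hab
      · have h' : (b : ℕ) < (a : ℕ) := by
          rcases Nat.lt_or_ge (b:ℕ) (a:ℕ) with h2 | h2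
          · exact h2
          · exact absurd (Fin.ext (by omega)) hne
        exact key b a h' hab.symm
    have := Fintype.card_le_of_injective _ hinj
    simp at this
    omega
  have hP0 : P 0 := ⟨u, hu, rfl⟩
  set j0 := Nat.findGreatest P k with hj0
  have hPj0 : P j0 := Nat.findGreatest_spec (Nat.zero_le k) hP0
  obtain ⟨s, hs, hchain⟩ := hPj0
  have hsStrt : Strt π s := by
    refine ⟨hs, fun w hw hfw => ?_⟩
    have hPsucc : P (j0 + 1) := by
      exact ⟨w, hw, by rw [Function.iterate_succ_apply, hfw, hchain]⟩
    have hlt : j0 + 1 ≤ k := le_of_lt (hbound _ hPsucc)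
    exact Nat.findGreatest_is_greatest (by omega) hlt hPsucc
  have hsnc' := hsnc j0 s hs hchain
  have hex : ∃ ℓ, k ≤ (extFun π)^[ℓ] s := exists_escape π hπ hs hsnc'
  have hjlen : j0 < len π s := by
    by_contra hc
    push_neg at hc
    have := iter_stab' π (len_spec π hex) hc
    rw [hchain] at this
    have := len_spec π hex
    omega
  exact ⟨s, j0, hsStrt, hsnc', hjlen, hchain⟩

include hπ in
lemma start_unique {s t j j' : ℕ} (hs : Strt π s) (ht : Strt π t)
    (hj : j < len π s) (hj' : j' < len π t)
    (heq : (extFun π)^[j] s = (extFun π)^[j'] t) : s = t ∧ j = j' := by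
  have key : ∀ s t j j' : ℕ, Strt π s → Strt π t → j < len π s → j' < len π t →
      j ≤ j' → (extFun π)^[j] s = (extFun π)^[j'] t → s = t ∧ j = j' := by
    intro s t j j' hs ht hj hj' hle heq
    have hst : s = (extFun π)^[j' - j] t := by
      have h2 : (extFun π)^[j] s = (extFun π)^[j] ((extFun π)^[j'-j] t) := by
        rw [← Function.iterate_add_apply, show j + (j' - j) = j' by omega]
        exact heq
      refine iter_cancel hπ (fun i hi => iter_lt_of_lt_len π (by omega)) (fun i hi => ?_) h2
      rw [← Function.iterate_add_apply]
      exact iter_lt_of_lt_len π (by omega)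
    rcases Nat.eq_zero_or_pos (j' - j) with h0 | h0
    · have : j = j' := by omega
      subst this
      simp at hst
      exact ⟨hst, rfl⟩
    · exfalso
      have : (extFun π) ((extFun π)^[j'-j-1] t) = s := by
        rw [← Function.iterate_succ_apply' (extFun π) (j'-j-1) t, show (j'-j-1).succ = j'-j by omega, ← hst]
      exact hs.2 _ (iter_lt_of_lt_len π (by omega)) this
  rcases le_or_gt j j' with h | h
  · exact key s t j j' hs ht hj hj' h heq
  · obtain ⟨h1, h2⟩ := key t s j' j ht hs hj' hj (by omega) heq.symm
    exact ⟨h1.symm, h2.symm⟩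


-- Cycle structure

lemma exists_cstart {u : ℕ} (hu : u < k)
    (hp : 0 < Function.minimalPeriod (extFun π) u) :
    ∃ s j, CStrt π s ∧ j < Function.minimalPeriod (extFun π) s ∧
      Function.minimalPeriod (extFun π) s = Function.minimalPeriod (extFun π) u ∧
      (extFun π)^[j] s = u := by
  set p := Function.minimalPeriod (extFun π) u with hpd
  have hmod : ∀ m : ℕ, (extFun π)^[m % p] u = (extFun π)^[m] u := fun m =>
    Function.iterate_mod_minimalPeriod_eq
  set O : Finset ℕ := (Finset.range p).image (fun j => (extFun π)^[j] u) with hO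
  have hne : O.Nonempty := ⟨u, by
    simp only [hO, Finset.mem_image]
    exact ⟨0, Finset.mem_range.mpr hp, rfl⟩⟩
  set s := O.min' hne with hsd
  obtain ⟨a, ha, has⟩ : ∃ a, a ∈ Finset.range p ∧ (extFun π)^[a] u = s := by
    have := O.min'_mem hne
    simp only [hO, Finset.mem_image] at this
    obtain ⟨a, h1, h2⟩ := this
    exact ⟨a, h1, h2⟩
  rw [Finset.mem_range] at ha
  have hps : Function.minimalPeriod (extFun π) s = p := by
    rw [← has, per_iterate π hp a]
  have hslt : s < k := by rw [← has]; exact cyc_iter_lt π hu hp a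
  have hcs : CStrt π s := by
    refine ⟨hslt, by rw [hps]; exact hp, fun j => ?_⟩
    have : (extFun π)^[j] s = (extFun π)^[(j + a) % p] u := by
      rw [hmod, Function.iterate_add_apply, has]
    rw [this]
    apply O.min'_le
    simp only [hO, Finset.mem_image]
    exact ⟨(j + a) % p, Finset.mem_range.mpr (Nat.mod_lt _ hp), rfl⟩
  refine ⟨s, (p - a) % p, hcs, by rw [hps]; exact Nat.mod_lt _ hp, by rw [hps], ?_⟩
  have : (extFun π)^[(p - a) % p] s = (extFun π)^[((p - a) % p + a) % p] u := by
    rw [hmod, Function.iterate_add_apply, has]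
  rw [this]
  have hm0 : ((p - a) % p + a) % p = 0 := by
    rw [Nat.mod_add_mod, show p - a + a = p by omega, Nat.mod_self]
  rw [hm0]
  simp

include hπ in
lemma cstart_unique {s t j j' : ℕ} (hs : CStrt π s) (ht : CStrt π t)
    (hj : j < Function.minimalPeriod (extFun π) s)
    (hj' : j' < Function.minimalPeriod (extFun π) t)
    (heq : (extFun π)^[j] s = (extFun π)^[j'] t) : s = t ∧ j = j' := by
  have hle : ∀ s t j j' : ℕ, CStrt π s → CStrt π t →
      (extFun π)^[j] s = (extFun π)^[j'] t → s ≤ t := by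
    intro s t j j' hs ht heq
    set m := Function.minimalPeriod (extFun π) t with hmd
    have hm : 0 < m := ht.2.1
    have heq' : (extFun π)^[j] s = (extFun π)^[j' % m] t := by
      rw [Function.iterate_mod_minimalPeriod_eq]; exact heq
    have h1 : (extFun π)^[m - j' % m + j] s = t := by
      rw [Function.iterate_add_apply, heq', ← Function.iterate_add_apply,
        show m - j' % m + j' % m = m by have := Nat.mod_lt j' hm; omega]
      exact Function.iterate_minimalPeriod
    rw [← h1]
    exact hs.2.2 _
  have hst : s = t :=
    le_antisymm (hle s t j j' hs ht heq) (hle t s j' j ht hs heq.symm)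
  subst hst
  refine ⟨rfl, ?_⟩
  have key : ∀ j j' : ℕ, j ≤ j' → j' < Function.minimalPeriod (extFun π) s →
      (extFun π)^[j] s = (extFun π)^[j'] s → j = j' := by
    intro j j' hle' hj' heq
    have hcanc : s = (extFun π)^[j' - j] s := by
      have h2 : (extFun π)^[j] s = (extFun π)^[j] ((extFun π)^[j'-j] s) := by
        rw [← Function.iterate_add_apply, show j + (j' - j) = j' by omega]
        exact heq
      refine iter_cancel hπ (fun i _ => cyc_iter_lt π hs.1 hs.2.1 i) (fun i _ => ?_) h2
      rw [← Function.iterate_add_apply]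
      exact cyc_iter_lt π hs.1 hs.2.1 _
    rcases Nat.eq_zero_or_pos (j' - j) with h0 | h0
    · omega
    · exfalso
      have hpp : Function.IsPeriodicPt (extFun π) (j' - j) s := hcanc.symm
      have := hpp.minimalPeriod_le h0
      omega
  rcases le_or_gt j j' with h | h
  · exact key j j' h hj' heq
  · exact (key j' j (by omega) hj heq.symm).symm

-- Decomposition

lemma strt_noncyc {s : ℕ} (hπ : Function.Injective π) (hs : Strt π s) :
    ¬ 0 < Function.minimalPeriod (extFun π) s := by
  intro hp
  set m := Function.minimalPeriod (extFun π) s with hm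
  have hw : (extFun π) ((extFun π)^[m-1] s) = s := by
    rw [← Function.iterate_succ_apply' (extFun π) (m-1) s, show (m-1).succ = m by omega]
    exact Function.iterate_minimalPeriod
  exact hs.2 _ (cyc_iter_lt π hs.1 hp _) hw

variable (π) in
abbrev CSet (i : ℕ) : Type :=
  {s : ℕ // CStrt π s ∧ Function.minimalPeriod (extFun π) s = i}

variable (π) in
abbrev PSet (i : ℕ) : Type := {s : ℕ // Strt π s ∧ len π s = i}

instance (i : ℕ) : Finite (CSet π i) :=
  Finite.of_injective (fun s => (⟨s.1, s.2.1.1⟩ : Fin k))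
    (fun a b hab => Subtype.ext (by simpa using congrArg Fin.val hab))

instance (i : ℕ) : Finite (PSet π i) :=
  Finite.of_injective (fun s => (⟨s.1, s.2.1.1⟩ : Fin k))
    (fun a b hab => Subtype.ext (by simpa using congrArg Fin.val hab))

variable (π) in
abbrev Pieces : Type := (Σ i : ℕ, CSet π i × Fin i) ⊕ (Σ i : ℕ, PSet π i × Fin i)

variable (π) in
def decFun : Pieces π → {u : ℕ // u < k}
  | Sum.inl ⟨_, s, j⟩ => ⟨(extFun π)^[(j : ℕ)] s.1, cyc_iter_lt π s.2.1.1 s.2.1.2.1 _⟩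
  | Sum.inr ⟨_, s, j⟩ => ⟨(extFun π)^[(j : ℕ)] s.1,
      iter_lt_of_lt_len π (by rw [s.2.2]; exact j.2)⟩

include hπ in
lemma decFun_bij : Function.Bijective (decFun π) := by
  constructor
  · rintro (⟨i, s, j⟩ | ⟨i, s, j⟩) (⟨i', t, j'⟩ | ⟨i', t, j'⟩) hab <;>
      simp only [decFun, Subtype.mk.injEq] at hab
    · obtain ⟨hst, hjj⟩ := cstart_unique hπ s.2.1 t.2.1
        (by rw [s.2.2]; exact j.2) (by rw [t.2.2]; exact j'.2) hab
      have hii : i = i' := by rw [← s.2.2, ← t.2.2, hst]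
      subst hii
      have : s = t := Subtype.ext hst
      subst this
      have : j = j' := Fin.ext hjj
      subst this
      rfl
    · exfalso
      have h1 : 0 < Function.minimalPeriod (extFun π) ((extFun π)^[(j:ℕ)] s.1) := by
        rw [per_iterate π s.2.1.2.1]; exact s.2.1.2.1
      have h2 := noncyc_iter hπ (strt_noncyc hπ t.2.1)
        (fun m hm => iter_lt_of_lt_len π (u := t.1) (by rw [t.2.2]; have := j'.2; omega)) (j := (j' : ℕ))
      rw [← hab] at h2
      exact h2 h1
    · exfalso
      have h1 : 0 < Function.minimalPeriod (extFun π) ((extFun π)^[(j':ℕ)] t.1) := by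
        rw [per_iterate π t.2.1.2.1]; exact t.2.1.2.1
      have h2 := noncyc_iter hπ (strt_noncyc hπ s.2.1)
        (fun m hm => iter_lt_of_lt_len π (u := s.1) (by rw [s.2.2]; have := j.2; omega)) (j := (j : ℕ))
      rw [hab] at h2
      exact h2 h1
    · obtain ⟨hst, hjj⟩ := start_unique hπ s.2.1 t.2.1
        (by rw [s.2.2]; exact j.2) (by rw [t.2.2]; exact j'.2) hab
      have hii : i = i' := by rw [← s.2.2, ← t.2.2, hst]
      subst hii
      have : s = t := Subtype.ext hst
      subst this
      have : j = j' := Fin.ext hjj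
      subst this
      rfl
  · rintro ⟨u, hu⟩
    rcases Nat.eq_zero_or_pos (Function.minimalPeriod (extFun π) u) with h0 | h0
    · obtain ⟨s, j, hstrt, hsnc, hj, hchain⟩ := exists_start hπ hu (by omega)
      exact ⟨Sum.inr ⟨len π s, ⟨s, hstrt, rfl⟩, ⟨j, hj⟩⟩, Subtype.ext hchain⟩
    · obtain ⟨s, j, hcs, hj, _, hchain⟩ := exists_cstart hu h0
      exact ⟨Sum.inl ⟨Function.minimalPeriod (extFun π) s, ⟨s, hcs, rfl⟩, ⟨j, hj⟩⟩,
        Subtype.ext hchain⟩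

variable (π) in
noncomputable def dec (hπ : Function.Injective π) : Pieces π ≃ {u : ℕ // u < k} :=
  Equiv.ofBijective (decFun π) (decFun_bij hπ)

include hπ in
lemma card_cset_mul (i : ℕ) (hi : 0 < i) :
    cyclicCount π i = Nat.card (CSet π i) * i := by
  have e : CSet π i × Fin i ≃
      {u : ℕ // u < k ∧ Function.minimalPeriod (extFun π) u = i} := by
    refine Equiv.ofBijective (fun p => ⟨(extFun π)^[(p.2 : ℕ)] p.1.1,
      cyc_iter_lt π p.1.2.1.1 p.1.2.1.2.1 _, by
        rw [per_iterate π p.1.2.1.2.1]; exact p.1.2.2⟩) ⟨?_, ?_⟩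
    · rintro ⟨s, j⟩ ⟨t, j'⟩ hab
      simp only [Subtype.mk.injEq] at hab
      obtain ⟨hst, hjj⟩ := cstart_unique hπ s.2.1 t.2.1
        (by rw [s.2.2]; exact j.2) (by rw [t.2.2]; exact j'.2) hab
      exact Prod.ext (Subtype.ext hst) (Fin.ext hjj)
    · rintro ⟨u, hu, hper⟩
      obtain ⟨s, j, hcs, hj, hpe, hchain⟩ := exists_cstart hu (by rw [hper]; exact hi)
      refine ⟨⟨⟨s, hcs, by rw [hpe, hper]⟩, ⟨j, by rw [← hper, ← hpe]; exact hj⟩⟩,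
        Subtype.ext hchain⟩
  have := Nat.card_congr e
  rw [Nat.card_prod] at this
  simp only [Nat.card_eq_fintype_card, Fintype.card_fin] at this
  rw [cyclicCount, ← this]

lemma cset_zero_empty : IsEmpty (CSet π 0) :=
  ⟨fun s => by have := s.2.1.2.1; have := s.2.2; omega⟩

lemma card_pset (i : ℕ) : pathCount π i = Nat.card (PSet π i) := by
  apply Nat.card_congr
  apply Equiv.subtypeEquivRight
  intro x
  unfold Strt len
  tauto


-- Matching π with ρ

section Two

variable {ρ : Fin k → Fin n} (hρ : Function.Injective ρ) (hst : SameCycleType π ρ)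

include hπ hρ hst in
lemma card_cset_eq (i : ℕ) : Nat.card (CSet π i) = Nat.card (CSet ρ i) := by
  rcases Nat.eq_zero_or_pos i with h0 | h0
  · subst h0
    have e1 := cset_zero_empty (π := π)
    have e2 := cset_zero_empty (π := ρ)
    rw [@Nat.card_of_isEmpty _ e1, @Nat.card_of_isEmpty _ e2]
  · have h1 := card_cset_mul hπ i h0
    have h2 := card_cset_mul hρ i h0
    have h3 := (hst i).1
    rw [h1, h2] at h3
    exact Nat.eq_of_mul_eq_mul_right h0 h3

variable (π) in
noncomputable def ψc (hπ : Function.Injective π) (hρ : Function.Injective ρ)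
    (hst : SameCycleType π ρ) (i : ℕ) : CSet π i ≃ CSet ρ i :=
  (Finite.card_eq.mp (card_cset_eq hπ hρ hst i)).some

variable (π) in
noncomputable def ψp (hst : SameCycleType π ρ) (i : ℕ) : PSet π i ≃ PSet ρ i :=
  (Finite.card_eq.mp (by rw [← card_pset, ← card_pset]; exact (hst i).2)).some

variable (π) in
noncomputable def midE (hπ : Function.Injective π) (hρ : Function.Injective ρ)
    (hst : SameCycleType π ρ) : Pieces π ≃ Pieces ρ :=
  Equiv.sumCongr
    (Equiv.sigmaCongrRight fun i => Equiv.prodCongr (ψc π hπ hρ hst i) (Equiv.refl _))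
    (Equiv.sigmaCongrRight fun i => Equiv.prodCongr (ψp π hst i) (Equiv.refl _))

variable (π) in
noncomputable def Phi (hπ : Function.Injective π) (hρ : Function.Injective ρ)
    (hst : SameCycleType π ρ) : {u : ℕ // u < k} ≃ {u : ℕ // u < k} :=
  ((dec π hπ).symm.trans (midE π hπ hρ hst)).trans (dec ρ hρ)

lemma Phi_cyc (i : ℕ) (s : CSet π i) (j : Fin i)
    (hlt : (extFun π)^[(j : ℕ)] s.1 < k) :
    (Phi π hπ hρ hst ⟨(extFun π)^[(j : ℕ)] s.1, hlt⟩).1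
      = (extFun ρ)^[(j : ℕ)] ((ψc π hπ hρ hst i) s).1 := by
  have h1 : (dec π hπ).symm ⟨(extFun π)^[(j : ℕ)] s.1, hlt⟩ = Sum.inl ⟨i, s, j⟩ := by
    rw [Equiv.symm_apply_eq]
    exact Subtype.ext rfl
  show ((dec ρ hρ) ((midE π hπ hρ hst) ((dec π hπ).symm _))).1 = _
  rw [h1]
  rfl

lemma Phi_path (i : ℕ) (s : PSet π i) (j : Fin i)
    (hlt : (extFun π)^[(j : ℕ)] s.1 < k) :
    (Phi π hπ hρ hst ⟨(extFun π)^[(j : ℕ)] s.1, hlt⟩).1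
      = (extFun ρ)^[(j : ℕ)] ((ψp π hst i) s).1 := by
  have h1 : (dec π hπ).symm ⟨(extFun π)^[(j : ℕ)] s.1, hlt⟩ = Sum.inr ⟨i, s, j⟩ := by
    rw [Equiv.symm_apply_eq]
    exact Subtype.ext rfl
  show ((dec ρ hρ) ((midE π hπ hρ hst) ((dec π hπ).symm _))).1 = _
  rw [h1]
  rfl

include hπ hρ hst in
lemma Phi_comm {u : ℕ} (hu : u < k) (hfu : extFun π u < k) :
    (Phi π hπ hρ hst ⟨extFun π u, hfu⟩).1
      = extFun ρ (Phi π hπ hρ hst ⟨u, hu⟩).1 := by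
  rcases Nat.eq_zero_or_pos (Function.minimalPeriod (extFun π) u) with h0 | h0
  · -- path case
    obtain ⟨s, j, hstrt, hsnc, hj, hchain⟩ := exists_start hπ hu (by omega)
    set i := len π s with hid
    set el : PSet π i := ⟨s, hstrt, rfl⟩ with held
    set s' := ((ψp π hst i) el).1 with hs'd
    have hΦu : (Phi π hπ hρ hst ⟨u, hu⟩).1 = (extFun ρ)^[j] s' := by
      have := Phi_path hπ hρ hst i el ⟨j, hj⟩
        (by simpa using iter_lt_of_lt_len π hj)
      simp only at this
      rw [show (⟨u, hu⟩ : {u : ℕ // u < k}) = ⟨(extFun π)^[j] s, by rw [hchain]; exact hu⟩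
        from Subtype.ext hchain.symm]
      exact this
    have hfu' : extFun π u = (extFun π)^[j+1] s := by
      rw [Function.iterate_succ_apply' (extFun π) j s, hchain]
    have hj1 : j + 1 < i := by
      by_contra hc
      push_neg at hc
      have hex : ∃ ℓ, k ≤ (extFun π)^[ℓ] s := exists_escape π hπ hstrt.1 hsnc
      have h2 : k ≤ (extFun π)^[i] s := len_spec π hex
      have h3 := iter_stab' π h2 hc
      rw [← hfu'] at h3
      omega
    have hΦfu : (Phi π hπ hρ hst ⟨extFun π u, hfu⟩).1 = (extFun ρ)^[j+1] s' := by
      have := Phi_path hπ hρ hst i el ⟨j+1, hj1⟩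
        (by simpa using iter_lt_of_lt_len π hj1)
      simp only at this
      rw [show (⟨extFun π u, hfu⟩ : {u : ℕ // u < k})
        = ⟨(extFun π)^[j+1] s, by rw [← hfu']; exact hfu⟩ from Subtype.ext hfu']
      exact this
    rw [hΦu, hΦfu, Function.iterate_succ_apply' (extFun ρ) j s']
  · -- cycle case
    obtain ⟨s, j, hcs, hj, hpe, hchain⟩ := exists_cstart hu h0
    set i := Function.minimalPeriod (extFun π) s with hid
    set el : CSet π i := ⟨s, hcs, rfl⟩ with held
    set s'el := (ψc π hπ hρ hst i) el with hs'eld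
    set s' := s'el.1 with hs'd
    have hip : 0 < i := hcs.2.1
    have hps' : Function.minimalPeriod (extFun ρ) s' = i := s'el.2.2
    have hΦu : (Phi π hπ hρ hst ⟨u, hu⟩).1 = (extFun ρ)^[j] s' := by
      have := Phi_cyc hπ hρ hst i el ⟨j, hj⟩
        (by simpa using cyc_iter_lt π hcs.1 hcs.2.1 j)
      simp only at this
      rw [show (⟨u, hu⟩ : {u : ℕ // u < k}) = ⟨(extFun π)^[j] s, by rw [hchain]; exact hu⟩
        from Subtype.ext hchain.symm]
      exact this
    have hfu' : extFun π u = (extFun π)^[(j+1) % i] s := by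
      rw [Function.iterate_mod_minimalPeriod_eq,
        Function.iterate_succ_apply' (extFun π) j s, hchain]
    have hΦfu : (Phi π hπ hρ hst ⟨extFun π u, hfu⟩).1
        = (extFun ρ)^[(j+1) % i] s' := by
      have := Phi_cyc hπ hρ hst i el ⟨(j+1) % i, Nat.mod_lt _ hip⟩
        (by simpa using cyc_iter_lt π hcs.1 hcs.2.1 _)
      simp only at this
      rw [show (⟨extFun π u, hfu⟩ : {u : ℕ // u < k})
        = ⟨(extFun π)^[(j+1) % i] s, by rw [← hfu']; exact hfu⟩ from Subtype.ext hfu']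
      exact this
    rw [hΦu, hΦfu, ← Function.iterate_succ_apply' (extFun ρ) j s', ← hps']
    exact Function.iterate_mod_minimalPeriod_eq


-- Endpoints

variable (π) in
def EptP (v : ℕ) : Prop := ∃ i : ℕ, ∃ s : PSet π i, (extFun π)^[i] s.1 = v

include hπ in
lemma ept_ge {v : ℕ} (hv : EptP π v) : k ≤ v := by
  obtain ⟨i, s, rfl⟩ := hv
  have hex := exists_escape π hπ s.2.1.1 (strt_noncyc hπ s.2.1)
  have := len_spec π hex
  rw [s.2.2] at this
  exact this

include hπ in
lemma ept_lt_n {v : ℕ} (hv : EptP π v) : v < n := by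
  obtain ⟨i, s, rfl⟩ := hv
  have hex := exists_escape π hπ s.2.1.1 (strt_noncyc hπ s.2.1)
  have hpos : 0 < i := by rw [← s.2.2]; exact len_pos π s.2.1.1 hex
  have heq : (extFun π)^[i] s.1 = extFun π ((extFun π)^[i-1] s.1) := by
    rw [← Function.iterate_succ_apply' (extFun π) (i-1) s.1, show (i-1).succ = i by omega]
  rw [heq]
  exact ext_lt_n π (iter_lt_of_lt_len π (by rw [s.2.2]; omega))

variable (π) in
def epFun : (Σ i : ℕ, PSet π i) → {v : ℕ // EptP π v} :=
  fun p => ⟨(extFun π)^[p.1] p.2.1, ⟨p.1, p.2, rfl⟩⟩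

include hπ in
lemma epFun_bij : Function.Bijective (epFun π) := by
  constructor
  · rintro ⟨i, s⟩ ⟨i', t⟩ hab
    simp only [epFun, Subtype.mk.injEq] at hab
    have key : ∀ (i : ℕ) (s : PSet π i) (i' : ℕ) (t : PSet π i'), i ≤ i' →
        (extFun π)^[i] s.1 = (extFun π)^[i'] t.1 → s.1 = t.1 ∧ i = i' := by
      intro i s i' t hle heq
      have hst : s.1 = (extFun π)^[i' - i] t.1 := by
        have h2 : (extFun π)^[i] s.1 = (extFun π)^[i] ((extFun π)^[i' - i] t.1) := by
          rw [← Function.iterate_add_apply, show i + (i' - i) = i' by omega]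
          exact heq
        refine iter_cancel hπ (fun m hm => iter_lt_of_lt_len π (by rw [s.2.2]; omega))
          (fun m hm => ?_) h2
        rw [← Function.iterate_add_apply]
        exact iter_lt_of_lt_len π (by rw [t.2.2]; omega)
      rcases Nat.eq_zero_or_pos (i' - i) with h0 | h0
      · have hii : i = i' := by omega
        refine ⟨?_, hii⟩
        rw [hst, h0]
        rfl
      · exfalso
        have : (extFun π) ((extFun π)^[i'-i-1] t.1) = s.1 := by
          rw [← Function.iterate_succ_apply' (extFun π) (i'-i-1) t.1,
            show (i'-i-1).succ = i'-i by omega, ← hst]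
        exact s.2.1.2 _ (iter_lt_of_lt_len π (by rw [t.2.2]; omega)) this
    have hii : i = i' ∧ s.1 = t.1 := by
      rcases le_or_gt i i' with hle | hlt
      · obtain ⟨a, b⟩ := key i s i' t hle (congrArg Subtype.val hab)
        exact ⟨b, a⟩
      · obtain ⟨a, b⟩ := key i' t i s (by omega) (congrArg Subtype.val hab).symm
        exact ⟨b.symm, a.symm⟩
    obtain ⟨h1, h2⟩ := hii
    subst h1
    have : s = t := Subtype.ext h2
    subst this
    rfl
  · rintro ⟨v, i, s, hv⟩
    exact ⟨⟨i, s⟩, Subtype.ext hv⟩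

variable (π) in
noncomputable def epd (hπ : Function.Injective π) : (Σ i : ℕ, PSet π i) ≃ {v : ℕ // EptP π v} :=
  Equiv.ofBijective (epFun π) (epFun_bij hπ)

variable (π) in
noncomputable def epE (hπ : Function.Injective π) (hρ : Function.Injective ρ)
    (hst : SameCycleType π ρ) : {v : ℕ // EptP π v} ≃ {v : ℕ // EptP ρ v} :=
  ((epd π hπ).symm.trans (Equiv.sigmaCongrRight fun i => ψp π hst i)).trans (epd ρ hρ)

lemma epE_apply (i : ℕ) (s : PSet π i) (hv : EptP π ((extFun π)^[i] s.1)) :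
    (epE π hπ hρ hst ⟨(extFun π)^[i] s.1, hv⟩).1
      = (extFun ρ)^[i] ((ψp π hst i) s).1 := by
  have h1 : (epd π hπ).symm ⟨(extFun π)^[i] s.1, hv⟩ = ⟨i, s⟩ := by
    rw [Equiv.symm_apply_eq]
    exact Subtype.ext rfl
  show ((epd ρ hρ) ((Equiv.sigmaCongrRight _) ((epd π hπ).symm _))).1 = _
  rw [h1]
  rfl


-- Outside part and sigma

variable (π) in
abbrev EOut : Type := {v : Fin n // ¬((v : ℕ) < k) ∧ EptP π (v : ℕ)}

variable (π) in
abbrev NOut : Type := {v : Fin n // ¬((v : ℕ) < k) ∧ ¬ EptP π (v : ℕ)}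

variable (π) in
def eoutEquiv (hπ : Function.Injective π) : EOut π ≃ {v : ℕ // EptP π v} where
  toFun v := ⟨v.1.1, v.2.2⟩
  invFun w := ⟨⟨w.1, ept_lt_n hπ w.2⟩, not_lt.2 (ept_ge hπ w.2), w.2⟩
  left_inv v := Subtype.ext (Fin.ext rfl)
  right_inv w := rfl

variable (π) in
def outSplitFun : (EOut π ⊕ NOut π) → {v : Fin n // ¬((v : ℕ) < k)}
  | Sum.inl v => ⟨v.1, v.2.1⟩
  | Sum.inr v => ⟨v.1, v.2.1⟩

variable (π) in
lemma outSplit_bij : Function.Bijective (outSplitFun π) := by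
  constructor
  · rintro (v | v) (w | w) hvw <;> simp only [outSplitFun, Subtype.mk.injEq] at hvw
    · exact congrArg Sum.inl (Subtype.ext hvw)
    · exact absurd (hvw ▸ v.2.2) w.2.2
    · exact absurd (hvw.symm ▸ w.2.2) v.2.2
    · exact congrArg Sum.inr (Subtype.ext hvw)
  · rintro ⟨v, hv⟩
    by_cases h2 : EptP π (v : ℕ)
    · exact ⟨Sum.inl ⟨v, hv, h2⟩, rfl⟩
    · exact ⟨Sum.inr ⟨v, hv, h2⟩, rfl⟩

include hπ hρ hst in
lemma card_nout_eq : Nat.card (NOut π) = Nat.card (NOut (n := n) ρ) := by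
  have h1 := Nat.card_congr (Equiv.ofBijective _ (outSplit_bij π))
  have h2 := Nat.card_congr (Equiv.ofBijective _ (outSplit_bij (n := n) ρ))
  rw [Nat.card_sum] at h1 h2
  have h3 : Nat.card (EOut π) = Nat.card (EOut (n := n) ρ) :=
    Nat.card_congr ((eoutEquiv π hπ).trans ((epE π hπ hρ hst).trans (eoutEquiv ρ hρ).symm))
  omega

variable (π) in
noncomputable def neE (hπ : Function.Injective π) (hρ : Function.Injective ρ)
    (hst : SameCycleType π ρ) : NOut π ≃ NOut (n := n) ρ :=
  (Finite.card_eq.mp (card_nout_eq hπ hρ hst)).some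

variable (π) in
noncomputable def sigmaFun (hπ : Function.Injective π) (hρ : Function.Injective ρ)
    (hst : SameCycleType π ρ) (hkn : k ≤ n) : Fin n → Fin n := fun x =>
  if hx : (x : ℕ) < k then
    ⟨(Phi π hπ hρ hst ⟨x, hx⟩).1, lt_of_lt_of_le (Phi π hπ hρ hst ⟨x, hx⟩).2 hkn⟩
  else if hx2 : EptP π (x : ℕ) then
    ⟨(epE π hπ hρ hst ⟨(x : ℕ), hx2⟩).1, ept_lt_n hρ (epE π hπ hρ hst ⟨(x : ℕ), hx2⟩).2⟩
  else (neE π hπ hρ hst ⟨x, hx, hx2⟩).1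

include hπ hρ hst in
lemma sigmaFun_inj (hkn : k ≤ n) : Function.Injective (sigmaFun π hπ hρ hst hkn) := by
  have hval : ∀ x : Fin n, ¬ ((x:ℕ) < k) →
      ¬ ((sigmaFun π hπ hρ hst hkn x : ℕ) < k) ∧
      (EptP π (x:ℕ) ↔ EptP ρ ((sigmaFun π hπ hρ hst hkn x : ℕ))) := by
    intro x hx
    unfold sigmaFun
    rw [dif_neg hx]
    by_cases hx2 : EptP π (x : ℕ)
    · rw [dif_pos hx2]
      have := (epE π hπ hρ hst ⟨(x : ℕ), hx2⟩).2
      exact ⟨not_lt.2 (ept_ge hρ this), iff_of_true hx2 this⟩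
    · rw [dif_neg hx2]
      have := (neE π hπ hρ hst ⟨x, hx, hx2⟩).2
      exact ⟨this.1, iff_of_false hx2 this.2⟩
  intro x y hxy
  by_cases hx : (x : ℕ) < k <;> by_cases hy : (y : ℕ) < k
  · unfold sigmaFun at hxy
    rw [dif_pos hx, dif_pos hy] at hxy
    have h1 : Phi π hπ hρ hst ⟨x, hx⟩ = Phi π hπ hρ hst ⟨y, hy⟩ :=
      Subtype.ext (congrArg Fin.val hxy)
    have := (Phi π hπ hρ hst).injective h1
    exact Fin.ext (congrArg Subtype.val this)
  · exfalso
    have h1 : (sigmaFun π hπ hρ hst hkn x : ℕ) < k := by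
      unfold sigmaFun; rw [dif_pos hx]
      exact (Phi π hπ hρ hst ⟨x, hx⟩).2
    have h2 := (hval y hy).1
    rw [hxy] at h1
    exact h2 h1
  · exfalso
    have h1 : (sigmaFun π hπ hρ hst hkn y : ℕ) < k := by
      unfold sigmaFun; rw [dif_pos hy]
      exact (Phi π hπ hρ hst ⟨y, hy⟩).2
    have h2 := (hval x hx).1
    rw [← hxy] at h1
    exact h2 h1
  · have hee : EptP π (x:ℕ) ↔ EptP π (y:ℕ) := by
      rw [(hval x hx).2, (hval y hy).2, hxy]
    unfold sigmaFun at hxy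
    rw [dif_neg hx, dif_neg hy] at hxy
    by_cases hx2 : EptP π (x : ℕ)
    · have hy2 : EptP π (y : ℕ) := hee.mp hx2
      rw [dif_pos hx2, dif_pos hy2] at hxy
      have h1 : (epE π hπ hρ hst ⟨(x:ℕ), hx2⟩) = (epE π hπ hρ hst ⟨(y:ℕ), hy2⟩) :=
        Subtype.ext (congrArg Fin.val hxy)
      have := (epE π hπ hρ hst).injective h1
      exact Fin.ext (congrArg Subtype.val this)
    · have hy2 : ¬ EptP π (y : ℕ) := fun hc => hx2 (hee.mpr hc)
      rw [dif_neg hx2, dif_neg hy2] at hxy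
      have h1 : (neE π hπ hρ hst ⟨x, hx, hx2⟩) = (neE π hπ hρ hst ⟨y, hy, hy2⟩) :=
        Subtype.ext hxy
      have := (neE π hπ hρ hst).injective h1
      exact congrArg Subtype.val this

variable (π) in
noncomputable def sigmaE (hπ : Function.Injective π) (hρ : Function.Injective ρ)
    (hst : SameCycleType π ρ) (hkn : k ≤ n) : Equiv.Perm (Fin n) :=
  Equiv.ofBijective _ (Finite.injective_iff_bijective.mp (sigmaFun_inj hπ hρ hst hkn))

lemma sigmaE_apply (hkn : k ≤ n) (x : Fin n) :
    sigmaE π hπ hρ hst hkn x = sigmaFun π hπ hρ hst hkn x := rfl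

end Two

end SCT

/-- If two `k`-permutations `π, ρ` of `[n]` have the same cycle type, then there is a
permutation `σ` of `[n]` mapping `[k]` onto `[k]` with `σ ∘ π ∘ σ⁻¹ = ρ` on `[k]`
(equivalently `σ (π u) = ρ (σ u)` for all `u ∈ [k]`). -/
theorem sameCycleType_conjugate (n k : ℕ) (hkn : k ≤ n) (π ρ : Fin k → Fin n)
    (hπ : Function.Injective π) (hρ : Function.Injective ρ) (h : SameCycleType π ρ) :
    ∃ σ : Equiv.Perm (Fin n),
      ∃ hσ : ∀ i : Fin n, (i : ℕ) < k ↔ ((σ i : Fin n) : ℕ) < k,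
        ∀ u : Fin k, σ (π u) =
          ρ ⟨((σ (Fin.castLE hkn u) : Fin n) : ℕ),
            (hσ (Fin.castLE hkn u)).mp (by simp)⟩ := by
  refine ⟨SCT.sigmaE π hπ hρ h hkn, ?_, ?_⟩
  · intro x
    rw [SCT.sigmaE_apply]
    constructor
    · intro hx
      unfold SCT.sigmaFun
      rw [dif_pos hx]
      exact (SCT.Phi π hπ hρ h ⟨x, hx⟩).2
    · intro hx
      by_contra hc
      unfold SCT.sigmaFun at hx
      rw [dif_neg hc] at hx
      by_cases h2 : SCT.EptP π (x : ℕ)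
      · rw [dif_pos h2] at hx
        exact absurd hx (not_lt.2 (SCT.ept_ge hρ (SCT.epE π hπ hρ h ⟨(x : ℕ), h2⟩).2))
      · rw [dif_neg h2] at hx
        exact (SCT.neE π hπ hρ h ⟨x, hc, h2⟩).2.1 hx
  · intro u
    have hu : (u : ℕ) < k := u.2
    have hπu : ((π u : Fin n) : ℕ) = extFun π (u : ℕ) := (SCT.ext_apply_lt π hu).symm
    have hm : ((SCT.sigmaE π hπ hρ h hkn (Fin.castLE hkn u)) : ℕ)
        = (SCT.Phi π hπ hρ h ⟨(u : ℕ), hu⟩).1 := by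
      rw [SCT.sigmaE_apply]
      unfold SCT.sigmaFun
      rw [dif_pos (show ((Fin.castLE hkn u : Fin n) : ℕ) < k from hu)]
      rfl
    set m := (SCT.Phi π hπ hρ h ⟨(u : ℕ), hu⟩).1 with hmd
    have hmk : m < k := (SCT.Phi π hπ hρ h ⟨(u : ℕ), hu⟩).2
    have hvk : ((SCT.sigmaE π hπ hρ h hkn (Fin.castLE hkn u)) : ℕ) < k := by
      rw [hm]; exact hmk
    have key : SCT.sigmaE π hπ hρ h hkn (π u) = ρ ⟨_, hvk⟩ := by
      have h2 : (⟨((SCT.sigmaE π hπ hρ h hkn (Fin.castLE hkn u)) : ℕ), hvk⟩ : Fin k)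
          = ⟨m, hmk⟩ := Fin.ext hm
      rw [h2]
      apply Fin.val_injective
      have hrhs : ((ρ ⟨m, hmk⟩ : Fin n) : ℕ) = extFun ρ m := (SCT.ext_apply_lt ρ hmk).symm
      rw [hrhs]
      by_cases hfk : extFun π (u : ℕ) < k
      · have hx : ((π u : Fin n) : ℕ) < k := by rw [hπu]; exact hfk
        have hl : ((SCT.sigmaE π hπ hρ h hkn (π u)) : ℕ)
            = (SCT.Phi π hπ hρ h ⟨((π u : Fin n) : ℕ), hx⟩).1 := by
          rw [SCT.sigmaE_apply]
          unfold SCT.sigmaFun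
          rw [dif_pos hx]
        rw [hl]
        rw [show (⟨((π u : Fin n) : ℕ), hx⟩ : {v : ℕ // v < k})
          = ⟨extFun π (u : ℕ), hfk⟩ from Subtype.ext hπu]
        exact SCT.Phi_comm hπ hρ h hu hfk
      · -- endpoint case
        have hnc : Function.minimalPeriod (extFun π) (u : ℕ) = 0 := by
          by_contra hp
          have := SCT.cyc_iter_lt π hu (by omega) 1
          simp only [Function.iterate_one] at this
          exact hfk this
        obtain ⟨s, j, hstrt, hsnc, hj, hchain⟩ := SCT.exists_start hπ hu (by omega)
        set i := SCT.len π s with hid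
        have hlen : i = j + 1 := by
          rcases lt_or_ge (j+1) i with hc | hc
          · exfalso
            have h1 := SCT.iter_lt_of_lt_len π hc
            rw [Function.iterate_succ_apply' (extFun π) j s, hchain] at h1
            exact hfk h1
          · omega
        set el : SCT.PSet π i := ⟨s, hstrt, rfl⟩ with held
        set s' := ((SCT.ψp π h i) el).1 with hs'd
        have hend : (extFun π)^[i] s = extFun π (u : ℕ) := by
          rw [hlen, Function.iterate_succ_apply' (extFun π) j s, hchain]
        have hept : SCT.EptP π ((π u : Fin n) : ℕ) := ⟨i, el, by rw [hend, ← hπu]⟩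
        have hx : ¬ ((π u : Fin n) : ℕ) < k := by rw [hπu]; exact hfk
        have hl : ((SCT.sigmaE π hπ hρ h hkn (π u)) : ℕ)
            = (SCT.epE π hπ hρ h ⟨((π u : Fin n) : ℕ), hept⟩).1 := by
          rw [SCT.sigmaE_apply]
          unfold SCT.sigmaFun
          rw [dif_neg hx, dif_pos hept]
        rw [hl]
        rw [show (⟨((π u : Fin n) : ℕ), hept⟩ : {v : ℕ // SCT.EptP π v})
          = ⟨(extFun π)^[i] el.1, ⟨i, el, rfl⟩⟩ from Subtype.ext (by
            show ((π u : Fin n) : ℕ) = (extFun π)^[i] s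
            rw [hend, hπu])]
        refine (SCT.epE_apply hπ hρ h i el _).trans ?_
        have hΦu : m = (extFun ρ)^[j] s' := by
          rw [hmd]
          have := SCT.Phi_path hπ hρ h i el ⟨j, by rw [hlen]; omega⟩
            (by simpa using SCT.iter_lt_of_lt_len π hj)
          simp only at this
          rw [show (⟨(u : ℕ), hu⟩ : {v : ℕ // v < k})
            = ⟨(extFun π)^[j] s, by rw [hchain]; exact hu⟩ from Subtype.ext hchain.symm]
          exact this
        rw [hΦu, ← Function.iterate_succ_apply' (extFun ρ) j s']
        show (extFun ρ)^[i] s' = (extFun ρ)^[j+1] s'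
        rw [hlen]
    exact key
end

section
/- If two k-permutations π and ρ of [n] have the same cycle type, then for every cycle type T, the number of neighbors of π in A(n,k) having cycle type T equals the number of neighbors of ρ having cycle type T. -/
attribute [local instance] Classical.propDecidable

open Function

namespace AG

variable {n k : ℕ} {f : ℕ → ℕ}

structure Good (n k : ℕ) (f : ℕ → ℕ) : Prop where
  fix : ∀ u, k ≤ u → f u = u
  flt : ∀ u, u < k → f u < n
  inj : ∀ u v, u < k → v < k → f u = f v → u = v

theorem Good.iter_fix (hf : Good n k f) {u : ℕ} (hu : k ≤ u) (j : ℕ) : f^[j] u = u := by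
  induction j with
  | zero => rfl
  | succ m ih => rw [Function.iterate_succ_apply', ih, hf.fix u hu]

/-- once an iterate leaves `[k)`, it is frozen -/
theorem Good.frozen (hf : Good n k f) {u a : ℕ} (ha : k ≤ f^[a] u) {b : ℕ} (hab : a ≤ b) :
    f^[b] u = f^[a] u := by
  obtain ⟨c, rfl⟩ := Nat.exists_eq_add_of_le hab
  rw [add_comm, Function.iterate_add_apply]
  exact hf.iter_fix ha c

theorem Good.iterate_lt (hf : Good n k f) {u b : ℕ} (hb : f^[b] u < k) {a : ℕ} (hab : a ≤ b) :
    f^[a] u < k := by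
  by_contra hc
  push_neg at hc
  rw [hf.frozen hc hab] at hb
  exact absurd hb (not_lt.2 hc)

/-- cancellation: if all iterates up to `a + d` stay below `k`, equality of iterates cancels -/
theorem Good.cancel (hf : Good n k f) {u : ℕ} :
    ∀ a d : ℕ, (∀ j, j ≤ a + d → f^[j] u < k) → f^[a] u = f^[a + d] u → u = f^[d] u := by
  intro a
  induction a with
  | zero => intro d _ h; simpa using h
  | succ m ih =>
    intro d hlt h
    apply ih d (fun j hj => hlt j (by omega))
    have h1 : f (f^[m] u) = f (f^[m + d] u) := by
      have h' := h
      rw [show m + 1 + d = (m + d) + 1 by omega] at h'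
      simpa [Function.iterate_succ_apply'] using h'
    exact hf.inj _ _ (hlt m (by omega)) (hlt (m + d) (by omega)) h1

theorem Good.periodic_iterate_lt (hf : Good n k f) {u : ℕ} (hu : u < k)
    (hp : u ∈ periodicPts f) (j : ℕ) : f^[j] u < k := by
  by_contra hc
  push_neg at hc
  obtain ⟨p, hp0, hper⟩ := hp
  have h1 : f^[p * (j + 1)] u = u := hper.mul_const (j + 1)
  have h2 : j ≤ p * (j + 1) := by nlinarith
  have := hf.frozen hc h2
  rw [h1] at this
  omega

/-- if `u < k` is not periodic, some iterate escapes `[k)` -/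
theorem Good.escape (hf : Good n k f) {u : ℕ} (hu : u < k) (hp : u ∉ periodicPts f) :
    {ℓ : ℕ | k ≤ f^[ℓ] u}.Nonempty := by
  by_contra hc
  have hall : ∀ ℓ, f^[ℓ] u < k := fun ℓ =>
    lt_of_not_ge fun h => hc ⟨ℓ, h⟩
  obtain ⟨a, b, hab, heq⟩ := Finite.exists_ne_map_eq_of_infinite
    (fun ℓ : ℕ => (⟨f^[ℓ] u, hall ℓ⟩ : Fin k))
  wlog hlt' : a < b generalizing a b
  · exact this b a hab.symm heq.symm (by omega)
  have heq' : f^[a] u = f^[a + (b - a)] u := by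
    have := congrArg Fin.val heq
    simpa [show a + (b - a) = b by omega] using this
  have hper : u = f^[b - a] u := hf.cancel a (b - a) (fun j _ => hall j) heq'
  exact hp ⟨b - a, by omega, hper.symm⟩


/-- exit time of a point -/
noncomputable def exit (k : ℕ) (f : ℕ → ℕ) (u : ℕ) : ℕ := sInf {ℓ : ℕ | k ≤ f^[ℓ] u}

def IsStart (k : ℕ) (f : ℕ → ℕ) (u : ℕ) : Prop := u < k ∧ ∀ w, w < k → f w ≠ u

theorem Good.start_not_per (hf : Good n k f) {s : ℕ} (hs : IsStart k f s) :
    s ∉ periodicPts f := by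
  rintro ⟨p, hp0, hper⟩
  have h1 : f (f^[p - 1] s) = s := by
    have h : f^[p] s = s := hper
    rw [show p = (p - 1) + 1 by omega, Function.iterate_succ_apply'] at h
    exact h
  have h2 : f^[p - 1] s < k := hf.periodic_iterate_lt hs.1 ⟨p, hp0, hper⟩ _
  exact hs.2 _ h2 h1

theorem Good.exit_mem (hf : Good n k f) {u : ℕ} (hu : u < k) (hp : u ∉ periodicPts f) :
    k ≤ f^[exit k f u] u :=
  Nat.sInf_mem (hf.escape hu hp)

theorem Good.lt_of_lt_exit (hf : Good n k f) {u j : ℕ} (hj : j < exit k f u) :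
    f^[j] u < k := by
  have := Nat.notMem_of_lt_sInf hj
  simpa using this

theorem Good.exit_pos (hf : Good n k f) {u : ℕ} (hu : u < k) (hp : u ∉ periodicPts f) :
    0 < exit k f u := by
  have h := hf.exit_mem hu hp
  rcases Nat.eq_zero_or_pos (exit k f u) with h0 | h0
  · rw [h0] at h; simp at h; omega
  · exact h0

/-- every non-periodic point below `k` lies on a path -/
theorem Good.path_decomp (hf : Good n k f) {u : ℕ} (hu : u < k) (hp : u ∉ periodicPts f) :
    ∃ s j, IsStart k f s ∧ s ∉ periodicPts f ∧ j < exit k f s ∧ f^[j] s = u := by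
  -- Q d: either found a start, or there is a backward chain of length d
  have Q : ∀ d : ℕ, (∃ s j, IsStart k f s ∧ j < exit k f s ∧ f^[j] s = u) ∨
      (∃ v, v < k ∧ v ∉ periodicPts f ∧ f^[d] v = u) := by
    intro d
    induction d with
    | zero => exact Or.inr ⟨u, hu, hp, rfl⟩
    | succ m ih =>
      rcases ih with h | ⟨v, hv, hvp, hveq⟩
      · exact Or.inl h
      by_cases hpred : ∃ w, w < k ∧ f w = v
      · obtain ⟨w, hw, hweq⟩ := hpred
        refine Or.inr ⟨w, hw, ?_, ?_⟩
        · intro hwp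
          obtain ⟨p, hp0, hper⟩ := hwp
          refine hp ⟨p, hp0, ?_⟩
          have hperw : f^[p] w = w := hper
          have hwu : f^[m + 1] w = u := by
            rw [Function.iterate_succ_apply, hweq, hveq]
          show f^[p] u = u
          calc f^[p] u = f^[p] (f^[m+1] w) := by rw [hwu]
            _ = f^[m+1] (f^[p] w) := by
                rw [← Function.iterate_add_apply, ← Function.iterate_add_apply, add_comm]
            _ = u := by rw [hperw, hwu]
        · rw [Function.iterate_succ_apply, hweq, hveq]
      · have hstart : IsStart k f v := ⟨hv, fun w hw hweq => hpred ⟨w, hw, hweq⟩⟩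
        refine Or.inl ⟨v, m, hstart, ?_, hveq⟩
        have hvu : f^[m] v < k := by rw [hveq]; exact hu
        by_contra hc
        push_neg at hc
        have hmem := hf.exit_mem hv (hf.start_not_per hstart)
        have := hf.iterate_lt hvu hc
        omega
  rcases Q (k + 1) with ⟨s, j, hs, hj, heq⟩ | ⟨v, hv, hvp, hveq⟩
  · exact ⟨s, j, hs, hf.start_not_per hs, hj, heq⟩
  · -- a backward chain of length k+1 inside [k) forces periodicity
    exfalso
    have hall : ∀ j, j ≤ k + 1 → f^[j] v < k := by
      intro j hj
      have : f^[k+1] v < k := by rw [hveq]; exact hu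
      exact hf.iterate_lt this hj
    have : ¬ Function.Injective (fun j : Fin (k+1+1) => (⟨f^[j.1] v, hall j.1 (by omega)⟩ : Fin k)) := by
      intro hinj
      have := Fintype.card_le_of_injective _ hinj
      simp at this
    rw [Function.not_injective_iff] at this
    obtain ⟨a, b, heq, hab⟩ := this
    wlog hlt' : (a : ℕ) < (b : ℕ) generalizing a b
    · exact this b a heq.symm hab.symm (by omega)
    have heq' : f^[(a:ℕ)] v = f^[(a:ℕ) + ((b:ℕ) - a)] v := by
      have := congrArg Fin.val heq
      simpa [show (a:ℕ) + ((b:ℕ) - a) = b by omega] using this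
    have hper : v = f^[(b:ℕ) - a] v :=
      hf.cancel a ((b:ℕ) - a) (fun j hj => hall j (by omega)) heq'
    exact hvp ⟨(b:ℕ) - a, by omega, hper.symm⟩


theorem Good.path_unique (hf : Good n k f) {s s' : ℕ} (hs : IsStart k f s)
    (hs' : IsStart k f s') :
    ∀ j j' : ℕ, j ≤ exit k f s → j' ≤ exit k f s' → f^[j] s = f^[j'] s' →
      s = s' ∧ j = j' := by
  intro j
  induction j generalizing s s' with
  | zero =>
    intro j' _ hj' heq
    cases j' with
    | zero => exact ⟨heq, rfl⟩
    | succ m =>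
      exfalso
      have hm : f^[m] s' < k := hf.lt_of_lt_exit (by omega)
      exact hs.2 _ hm (by rw [← Function.iterate_succ_apply' f m s']; exact heq.symm)
  | succ m ih =>
    intro j' hj hj' heq
    cases j' with
    | zero =>
      exfalso
      have hm : f^[m] s < k := hf.lt_of_lt_exit (by omega)
      exact hs'.2 _ hm (by rw [← Function.iterate_succ_apply' f m s]; exact heq)
    | succ m' =>
      have h1 : f (f^[m] s) = f (f^[m'] s') := by
        rw [← Function.iterate_succ_apply' f m s, ← Function.iterate_succ_apply' f m' s']
        exact heq
      have h2 : f^[m] s = f^[m'] s' :=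
        hf.inj _ _ (hf.lt_of_lt_exit (by omega)) (hf.lt_of_lt_exit (by omega)) h1
      obtain ⟨he, hm⟩ := ih hs hs' m' (by omega) (by omega) h2
      exact ⟨he, by omega⟩

def IsRep (k : ℕ) (f : ℕ → ℕ) (i r : ℕ) : Prop :=
  r < k ∧ minimalPeriod f r = i ∧ ∀ j, r ≤ f^[j] r

theorem Good.rep_exists (hf : Good n k f) {u : ℕ} (hu : u < k) (hp : u ∈ periodicPts f) :
    ∃ r j, IsRep k f (minimalPeriod f u) r ∧ j < minimalPeriod f u ∧ f^[j] r = u := by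
  set p := minimalPeriod f u with hpdef
  have hp0 : 0 < p := minimalPeriod_pos_iff_mem_periodicPts.2 hp
  set orb : Finset ℕ := (Finset.range p).image (fun j => f^[j] u) with horb
  have hne : orb.Nonempty := by
    refine ⟨u, ?_⟩
    simp only [horb, Finset.mem_image]
    exact ⟨0, Finset.mem_range.2 hp0, rfl⟩
  set r := orb.min' hne with hrdef
  obtain ⟨a, ha, haeq⟩ : ∃ a, a < p ∧ f^[a] u = r := by
    have := orb.min'_mem hne
    simp only [horb, Finset.mem_image, Finset.mem_range] at this
    obtain ⟨a, ha, haeq⟩ := this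
    exact ⟨a, ha, haeq⟩
  have hrper : r ∈ periodicPts f := by
    rw [← haeq]
    refine ⟨p, hp0, ?_⟩
    show f^[p] (f^[a] u) = f^[a] u
    rw [← Function.iterate_add_apply, add_comm, Function.iterate_add_apply]
    rw [show f^[p] u = u from iterate_minimalPeriod]
  have hrmin : minimalPeriod f r = p := by
    rw [← haeq]; exact minimalPeriod_apply_iterate hp a
  have hrk : r < k := by rw [← haeq]; exact hf.periodic_iterate_lt hu hp a
  have hmem : ∀ j, f^[j] r ∈ orb := by
    intro j
    have h1 : f^[j] r = f^[(j + a) % p] u := by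
      rw [← haeq, ← Function.iterate_add_apply]
      rw [hpdef, iterate_mod_minimalPeriod_eq]
    rw [h1]
    simp only [horb, Finset.mem_image, Finset.mem_range]
    exact ⟨(j + a) % p, Nat.mod_lt _ hp0, rfl⟩
  have hrep : IsRep k f p r := ⟨hrk, hrmin, fun j => orb.min'_le _ (hmem j)⟩
  refine ⟨r, (p - a) % p, hrep, Nat.mod_lt _ hp0, ?_⟩
  rcases Nat.eq_zero_or_pos a with h0 | h0
  · subst h0; simpa using haeq.symm
  · rw [Nat.mod_eq_of_lt (by omega), ← haeq, ← Function.iterate_add_apply,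
      show p - a + a = p by omega]
    exact iterate_minimalPeriod

theorem Good.rep_unique (hf : Good n k f) {i r r' j j' : ℕ} (hr : IsRep k f i r)
    (hr' : IsRep k f i r') (hj : j < i) (hj' : j' < i) (heq : f^[j] r = f^[j'] r') :
    r = r' ∧ j = j' := by
  have key : ∀ (a b : ℕ) (ha : IsRep k f i a) (hb : IsRep k f i b) (m m' : ℕ),
      m < i → f^[m] a = f^[m'] b → b ≤ a := by
    intro a b ha hb m m' hm hab
    have h2 : f^[i - m] (f^[m] a) = a := by
      rw [← Function.iterate_add_apply, show i - m + m = i by omega, ← ha.2.1]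
      exact iterate_minimalPeriod
    have h1 : a = f^[i - m + m'] b := by
      calc a = f^[i - m] (f^[m] a) := h2.symm
        _ = f^[i - m] (f^[m'] b) := by rw [hab]
        _ = f^[i - m + m'] b := (Function.iterate_add_apply f (i - m) m' b).symm
    rw [h1]
    exact hb.2.2 _
  have hrr' : r = r' :=
    le_antisymm (key r' r hr' hr j' j hj' heq.symm) (key r r' hr hr' j j' hj heq)
  subst hrr'
  refine ⟨rfl, ?_⟩
  have := Function.iterate_injOn_Iio_minimalPeriod (f := f) (x := r)
    (by rw [hr.2.1]; exact Set.mem_Iio.2 hj) (by rw [hr.2.1]; exact Set.mem_Iio.2 hj') heq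
  exact this

theorem Good.not_per_iterate (hf : Good n k f) {s j : ℕ} (hsp : s ∉ periodicPts f)
    (hlt : ∀ l, l ≤ j → f^[l] s < k) : f^[j] s ∉ periodicPts f := by
  rintro ⟨p, hp0, hper⟩
  have hperj : f^[p] (f^[j] s) = f^[j] s := hper
  have hallk : ∀ l, l ≤ j + p → f^[l] s < k := by
    intro l hl
    rcases le_or_gt l j with h | h
    · exact hlt l h
    · have : f^[l] s = f^[l - j] (f^[j] s) := by
        rw [← Function.iterate_add_apply, show l - j + j = l by omega]
      rw [this]
      exact hf.periodic_iterate_lt (hlt j le_rfl) ⟨p, hp0, hper⟩ _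
  have heq : f^[j] s = f^[j + p] s := by
    rw [add_comm, Function.iterate_add_apply, hperj]
  exact hsp ⟨p, hp0, (hf.cancel j p hallk heq).symm⟩

theorem Good.endpoint_lt_n (hf : Good n k f) {s : ℕ} (hs : IsStart k f s) :
    f^[exit k f s] s < n := by
  have hsp := hf.start_not_per hs
  have hpos := hf.exit_pos hs.1 hsp
  rw [show exit k f s = (exit k f s - 1) + 1 by omega, Function.iterate_succ_apply']
  exact hf.flt _ (hf.lt_of_lt_exit (by omega))

theorem Good.endpoint_mem_image (hf : Good n k f) {s : ℕ} (hs : IsStart k f s) :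
    ∃ w, w < k ∧ f w = f^[exit k f s] s := by
  have hsp := hf.start_not_per hs
  have hpos := hf.exit_pos hs.1 hsp
  refine ⟨f^[exit k f s - 1] s, hf.lt_of_lt_exit (by omega), ?_⟩
  have h := Function.iterate_succ_apply' f (exit k f s - 1) s
  rw [Nat.succ_eq_add_one, show (exit k f s - 1) + 1 = exit k f s by omega] at h
  exact h.symm

theorem Good.image_is_endpoint (hf : Good n k f) {v w : ℕ} (hv : k ≤ v) (hw : w < k)
    (hweq : f w = v) : ∃ s, IsStart k f s ∧ f^[exit k f s] s = v := by
  have hwp : w ∉ periodicPts f := by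
    intro hper
    have := hf.periodic_iterate_lt hw hper 1
    simp only [Function.iterate_one] at this
    omega
  obtain ⟨s, j, hs, hsp, hj, heq⟩ := hf.path_decomp hw hwp
  have hj1 : f^[j + 1] s = v := by rw [Function.iterate_succ_apply', heq, hweq]
  have hle : exit k f s ≤ j + 1 := Nat.sInf_le (by rw [Set.mem_setOf_eq, hj1]; exact hv)
  have hex : exit k f s = j + 1 := by omega
  exact ⟨s, hs, by rw [hex]; exact hj1⟩


def RepT (k : ℕ) (f : ℕ → ℕ) (i : ℕ) := {r : ℕ // IsRep k f i r}
def StartT (k : ℕ) (f : ℕ → ℕ) (i : ℕ) :=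
  {u : ℕ // u < k ∧ (∀ w, w < k → f w ≠ u) ∧ sInf {ℓ : ℕ | k ≤ f^[ℓ] u} = i}
def FreeT (n k : ℕ) (f : ℕ → ℕ) := {v : ℕ // (k ≤ v ∧ v < n) ∧ ∀ w, w < k → f w ≠ v}
def TailT (n : ℕ) := {v : ℕ // n ≤ v}

def Idx (n k : ℕ) (f : ℕ → ℕ) :=
  (Σ i : ℕ, RepT k f (i+1) × Fin (i+1)) ⊕
    ((Σ i : ℕ, StartT k f (i+1) × Fin (i+2)) ⊕ (FreeT n k f ⊕ TailT n))

def T (n k : ℕ) (f : ℕ → ℕ) : Idx n k f → ℕ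
  | Sum.inl ⟨_, r, j⟩ => f^[j.1] r.1
  | Sum.inr (Sum.inl ⟨_, s, j⟩) => f^[j.1] s.1
  | Sum.inr (Sum.inr (Sum.inl v)) => v.1
  | Sum.inr (Sum.inr (Sum.inr v)) => v.1

theorem StartT.isStart {i : ℕ} (s : StartT k f i) : IsStart k f s.1 := ⟨s.2.1, s.2.2.1⟩
theorem StartT.exit_eq {i : ℕ} (s : StartT k f i) : exit k f s.1 = i := s.2.2.2

theorem Good.cyc_val (hf : Good n k f) {i : ℕ} (r : RepT k f (i+1)) (j : Fin (i+1)) :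
    f^[j.1] r.1 < k ∧ f^[j.1] r.1 ∈ periodicPts f ∧
      minimalPeriod f (f^[j.1] r.1) = i + 1 := by
  have hper : r.1 ∈ periodicPts f :=
    minimalPeriod_pos_iff_mem_periodicPts.1 (by rw [r.2.2.1]; omega)
  exact ⟨hf.periodic_iterate_lt r.2.1 hper _, ⟨minimalPeriod f r.1,
      by rw [r.2.2.1]; omega,
      by
        have h : IsPeriodicPt f (minimalPeriod f r.1) r.1 := isPeriodicPt_minimalPeriod f r.1
        exact h.apply_iterate j.1⟩,
    (minimalPeriod_apply_iterate hper j.1).trans r.2.2.1⟩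

theorem Good.path_val (hf : Good n k f) {i : ℕ} (s : StartT k f (i+1)) {j : ℕ}
    (hj : j ≤ i) : f^[j] s.1 < k ∧ f^[j] s.1 ∉ periodicPts f := by
  have h1 : f^[j] s.1 < k := hf.lt_of_lt_exit (by rw [s.exit_eq]; omega)
  refine ⟨h1, hf.not_per_iterate (hf.start_not_per s.isStart) ?_⟩
  intro l hl
  exact hf.lt_of_lt_exit (by rw [s.exit_eq]; omega)

theorem Good.path_end_val (hf : Good n k f) {i : ℕ} (s : StartT k f (i+1)) :
    k ≤ f^[i+1] s.1 ∧ f^[i+1] s.1 < n ∧ ∃ w, w < k ∧ f w = f^[i+1] s.1 := by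
  have h1 := hf.exit_mem s.2.1 (hf.start_not_per s.isStart)
  have h2 := hf.endpoint_lt_n s.isStart
  have h3 := hf.endpoint_mem_image s.isStart
  rw [s.exit_eq] at h1 h2 h3
  exact ⟨h1, h2, h3⟩

theorem Good.T_injective (hf : Good n k f) (hkn : k ≤ n) :
    Function.Injective (T n k f) := by
  intro x y hxy
  rcases x with ⟨i, r, j⟩ | (⟨i, s, j⟩ | (v | v)) <;>
    rcases y with ⟨i', r', j'⟩ | (⟨i', s', j'⟩ | (v' | v'))
  -- C C
  · have hval : f^[j.1] r.1 = f^[j'.1] r'.1 := hxy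
    obtain ⟨hk1, hp1, hm1⟩ := hf.cyc_val r j
    obtain ⟨hk2, hp2, hm2⟩ := hf.cyc_val r' j'
    rw [hval] at hm1
    have hii : i = i' := by omega
    subst hii
    obtain ⟨h1, h2⟩ := hf.rep_unique r.2 r'.2 j.2 j'.2 hval
    have hr : r = r' := Subtype.ext h1
    have hj : j = j' := Fin.ext h2
    subst hr; subst hj; rfl
  -- C P
  · exfalso
    have hval : f^[j.1] r.1 = f^[j'.1] s'.1 := hxy
    obtain ⟨hk1, hp1, hm1⟩ := hf.cyc_val r j
    rcases le_or_gt j'.1 i' with hle | hlt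
    · obtain ⟨hk2, hp2⟩ := hf.path_val s' hle
      rw [hval] at hp1
      exact hp2 hp1
    · have hj' : (j' : ℕ) = i' + 1 := by omega
      obtain ⟨h1, _, _⟩ := hf.path_end_val s'
      have h1' : k ≤ f^[(j' : ℕ)] s'.1 := by rw [hj']; exact h1
      omega
  -- C F
  · exfalso
    have hval : f^[j.1] r.1 = v'.1 := hxy
    obtain ⟨hk1, _, _⟩ := hf.cyc_val r j
    have := v'.2.1.1
    omega
  -- C L
  · exfalso
    have hval : f^[j.1] r.1 = v'.1 := hxy
    obtain ⟨hk1, _, _⟩ := hf.cyc_val r j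
    have := v'.2
    omega
  -- P C
  · exfalso
    have hval : f^[j.1] s.1 = f^[j'.1] r'.1 := hxy
    obtain ⟨hk1, hp1, hm1⟩ := hf.cyc_val r' j'
    rcases le_or_gt j.1 i with hle | hlt
    · obtain ⟨hk2, hp2⟩ := hf.path_val s hle
      rw [← hval] at hp1
      exact hp2 hp1
    · have hj : (j : ℕ) = i + 1 := by omega
      obtain ⟨h1, _, _⟩ := hf.path_end_val s
      have h1' : k ≤ f^[(j : ℕ)] s.1 := by rw [hj]; exact h1
      omega
  -- P P
  · have hval : f^[j.1] s.1 = f^[j'.1] s'.1 := hxy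
    have hj2 : j.1 ≤ exit k f s.1 := by rw [s.exit_eq]; omega
    have hj2' : j'.1 ≤ exit k f s'.1 := by rw [s'.exit_eq]; omega
    obtain ⟨h1, h2⟩ := hf.path_unique s.isStart s'.isStart j.1 j'.1 hj2 hj2' hval
    have e1 := s.exit_eq
    have e2 := s'.exit_eq
    rw [h1] at e1
    have hii : i = i' := by omega
    subst hii
    have hs : s = s' := Subtype.ext h1
    have hj : j = j' := Fin.ext h2
    subst hs; subst hj; rfl
  -- P F
  · exfalso
    have hval : f^[j.1] s.1 = v'.1 := hxy
    rcases le_or_gt j.1 i with hle | hlt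
    · obtain ⟨hk2, _⟩ := hf.path_val s hle
      have := v'.2.1.1
      omega
    · have hj : (j : ℕ) = i + 1 := by omega
      obtain ⟨_, _, w, hw, hweq⟩ := hf.path_end_val s
      have hweq' : f w = f^[(j : ℕ)] s.1 := by rw [hj]; exact hweq
      exact v'.2.2 w hw (by rw [hweq', hval])
  -- P L
  · exfalso
    have hval : f^[j.1] s.1 = v'.1 := hxy
    rcases le_or_gt j.1 i with hle | hlt
    · obtain ⟨hk2, _⟩ := hf.path_val s hle
      have := v'.2
      omega
    · have hj : (j : ℕ) = i + 1 := by omega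
      obtain ⟨_, h2, _⟩ := hf.path_end_val s
      have h2' : f^[(j : ℕ)] s.1 < n := by rw [hj]; exact h2
      have := v'.2
      omega
  -- F C
  · exfalso
    have hval : v.1 = f^[j'.1] r'.1 := hxy
    obtain ⟨hk1, _, _⟩ := hf.cyc_val r' j'
    have := v.2.1.1
    omega
  -- F P
  · exfalso
    have hval : v.1 = f^[j'.1] s'.1 := hxy
    rcases le_or_gt j'.1 i' with hle | hlt
    · obtain ⟨hk2, _⟩ := hf.path_val s' hle
      have := v.2.1.1
      omega
    · have hj' : (j' : ℕ) = i' + 1 := by omega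
      obtain ⟨_, _, w, hw, hweq⟩ := hf.path_end_val s'
      have hweq' : f w = f^[(j' : ℕ)] s'.1 := by rw [hj']; exact hweq
      exact v.2.2 w hw (by rw [hweq', ← hval])
  -- F F
  · have : v = v' := Subtype.ext hxy
    rw [this]
  -- F L
  · exfalso
    have hval : v.1 = v'.1 := hxy
    have := v.2.1.2
    have := v'.2
    omega
  -- L C
  · exfalso
    have hval : v.1 = f^[j'.1] r'.1 := hxy
    obtain ⟨hk1, _, _⟩ := hf.cyc_val r' j'
    have := v.2
    omega
  -- L P
  · exfalso
    have hval : v.1 = f^[j'.1] s'.1 := hxy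
    rcases le_or_gt j'.1 i' with hle | hlt
    · obtain ⟨hk2, _⟩ := hf.path_val s' hle
      have := v.2
      omega
    · have hj' : (j' : ℕ) = i' + 1 := by omega
      obtain ⟨_, h2, _⟩ := hf.path_end_val s'
      have h2' : f^[(j' : ℕ)] s'.1 < n := by rw [hj']; exact h2
      have := v.2
      omega
  -- L F
  · exfalso
    have hval : v.1 = v'.1 := hxy
    have := v.2
    have := v'.2.1.2
    omega
  -- L L
  · have : v = v' := Subtype.ext hxy
    rw [this]


theorem Good.T_surjective (hf : Good n k f) (hkn : k ≤ n) :
    Function.Surjective (T n k f) := by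
  intro u
  rcases lt_or_ge u k with hu | hu
  · by_cases hp : u ∈ periodicPts f
    · obtain ⟨r, j, hr, hj, heq⟩ := hf.rep_exists hu hp
      have hp0 : 0 < minimalPeriod f u := minimalPeriod_pos_iff_mem_periodicPts.2 hp
      refine ⟨Sum.inl ⟨minimalPeriod f u - 1,
        ⟨r, by rw [show minimalPeriod f u - 1 + 1 = minimalPeriod f u by omega]; exact hr⟩,
        ⟨j, by omega⟩⟩, ?_⟩
      exact heq
    · obtain ⟨s, j, hs, hsp, hj, heq⟩ := hf.path_decomp hu hp
      have hp0 : 0 < exit k f s := hf.exit_pos hs.1 hsp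
      refine ⟨Sum.inr (Sum.inl ⟨exit k f s - 1,
        ⟨s, hs.1, hs.2, by show exit k f s = _; omega⟩, ⟨j, by omega⟩⟩), ?_⟩
      exact heq
  · rcases lt_or_ge u n with hun | hun
    · by_cases him : ∃ w, w < k ∧ f w = u
      · obtain ⟨w, hw, hweq⟩ := him
        obtain ⟨s, hs, heq⟩ := hf.image_is_endpoint hu hw hweq
        have hp0 : 0 < exit k f s := hf.exit_pos hs.1 (hf.start_not_per hs)
        refine ⟨Sum.inr (Sum.inl ⟨exit k f s - 1,
          ⟨s, hs.1, hs.2, by show exit k f s = _; omega⟩, ⟨exit k f s, by omega⟩⟩), ?_⟩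
        exact heq
      · exact ⟨Sum.inr (Sum.inr (Sum.inl ⟨u, ⟨hu, hun⟩,
          fun w hw hweq => him ⟨w, hw, hweq⟩⟩)), rfl⟩
    · exact ⟨Sum.inr (Sum.inr (Sum.inr ⟨u, hun⟩)), rfl⟩

def shiftIdx (n k : ℕ) (f : ℕ → ℕ) : Idx n k f → Idx n k f
  | Sum.inl ⟨i, r, j⟩ => Sum.inl ⟨i, r, ⟨(j.1 + 1) % (i + 1), Nat.mod_lt _ (by omega)⟩⟩
  | Sum.inr (Sum.inl ⟨i, s, j⟩) =>
      Sum.inr (Sum.inl ⟨i, s, ⟨min (j.1 + 1) (i + 1), by omega⟩⟩)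
  | Sum.inr (Sum.inr (Sum.inl v)) => Sum.inr (Sum.inr (Sum.inl v))
  | Sum.inr (Sum.inr (Sum.inr v)) => Sum.inr (Sum.inr (Sum.inr v))

theorem Good.T_shift (hf : Good n k f) (hkn : k ≤ n) (x : Idx n k f) :
    T n k f (shiftIdx n k f x) = f (T n k f x) := by
  rcases x with ⟨i, r, j⟩ | (⟨i, s, j⟩ | (v | v))
  · show f^[(j.1 + 1) % (i + 1)] r.1 = f (f^[j.1] r.1)
    have h1 := iterate_mod_minimalPeriod_eq (f := f) (x := r.1) (n := j.1 + 1)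
    rw [r.2.2.1] at h1
    rw [h1, Function.iterate_succ_apply' f j.1 r.1]
  · show f^[min (j.1 + 1) (i + 1)] s.1 = f (f^[j.1] s.1)
    rcases le_or_gt (j.1 + 1) (i + 1) with hle | hlt
    · rw [min_eq_left hle, Function.iterate_succ_apply' f j.1 s.1]
    · have hj : j.1 = i + 1 := by omega
      rw [min_eq_right (by omega), hj]
      have h1 := (hf.path_end_val s).1
      exact (hf.fix _ h1).symm
  · exact (hf.fix v.1 v.2.1.1).symm
  · exact (hf.fix v.1 (le_trans hkn v.2)).symm

variable {g : ℕ → ℕ}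

def mapIdx (n k : ℕ) (f g : ℕ → ℕ) (eR : ∀ i, RepT k f (i+1) ≃ RepT k g (i+1))
    (eS : ∀ i, StartT k f (i+1) ≃ StartT k g (i+1)) (eF : FreeT n k f ≃ FreeT n k g) :
    Idx n k f ≃ Idx n k g :=
  Equiv.sumCongr (Equiv.sigmaCongrRight fun i => (eR i).prodCongr (Equiv.refl _))
    (Equiv.sumCongr (Equiv.sigmaCongrRight fun i => (eS i).prodCongr (Equiv.refl _))
      (Equiv.sumCongr eF (Equiv.refl _)))

theorem mapIdx_shift (eR : ∀ i, RepT k f (i+1) ≃ RepT k g (i+1))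
    (eS : ∀ i, StartT k f (i+1) ≃ StartT k g (i+1)) (eF : FreeT n k f ≃ FreeT n k g)
    (x : Idx n k f) :
    mapIdx n k f g eR eS eF (shiftIdx n k f x) = shiftIdx n k g (mapIdx n k f g eR eS eF x) := by
  rcases x with ⟨i, r, j⟩ | (⟨i, s, j⟩ | (v | v)) <;> rfl


theorem finite_of_bounded {m : ℕ} {P : ℕ → Prop} (h : ∀ u, P u → u < m) :
    Finite {u : ℕ // P u} :=
  Finite.of_injective (fun x => (⟨x.1, h x.1 x.2⟩ : Fin m))
    (fun a b hab => Subtype.ext (by simpa [Fin.ext_iff] using hab))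

instance {i : ℕ} : Finite (RepT k f i) := finite_of_bounded (fun _ h => h.1)
instance {i : ℕ} : Finite (StartT k f i) := finite_of_bounded (fun _ h => h.1)
instance : Finite (FreeT n k f) := finite_of_bounded (fun _ h => h.1.2)
instance : Finite {u : ℕ // u < k ∧ minimalPeriod f u = i} :=
  finite_of_bounded (fun _ h => h.1)
instance : Finite {v : ℕ // k ≤ v ∧ v < n} := finite_of_bounded (fun _ h => h.2)

instance : Finite (Σ i : ℕ, StartT k f (i+1)) := by
  apply Finite.of_injective (fun x : Σ i : ℕ, StartT k f (i+1) =>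
    (⟨x.2.1, x.2.2.1⟩ : Fin k))
  rintro ⟨i, s⟩ ⟨i', s'⟩ hss
  have hval : s.1 = s'.1 := by simpa [Fin.ext_iff] using hss
  have hii : i = i' := by
    have h1 := s.2.2.2
    have h2 := s'.2.2.2
    rw [hval] at h1
    omega
  subst hii
  simp only [Sigma.mk.inj_iff, heq_eq_eq]
  exact ⟨trivial, Subtype.ext hval⟩

theorem Good.card_cyc (hf : Good n k f) (i : ℕ) :
    Nat.card {u : ℕ // u < k ∧ minimalPeriod f u = i + 1} =
      Nat.card (RepT k f (i+1)) * (i + 1) := by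
  have hbij : Function.Bijective (fun x : RepT k f (i+1) × Fin (i+1) =>
      (⟨f^[x.2.1] x.1.1, (hf.cyc_val x.1 x.2).1, (hf.cyc_val x.1 x.2).2.2⟩ :
        {u : ℕ // u < k ∧ minimalPeriod f u = i + 1})) := by
    constructor
    · rintro ⟨r, j⟩ ⟨r', j'⟩ hab
      have hval : f^[j.1] r.1 = f^[j'.1] r'.1 := by
        simpa [Subtype.ext_iff] using hab
      obtain ⟨h1, h2⟩ := hf.rep_unique r.2 r'.2 j.2 j'.2 hval
      simp only [Prod.mk.injEq]
      exact ⟨Subtype.ext h1, Fin.ext h2⟩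
    · rintro ⟨u, hu, hm⟩
      have hp : u ∈ periodicPts f := minimalPeriod_pos_iff_mem_periodicPts.1 (by omega)
      obtain ⟨r, j, hr, hj, heq⟩ := hf.rep_exists hu hp
      rw [hm] at hr hj
      exact ⟨(⟨r, hr⟩, ⟨j, hj⟩), Subtype.ext heq⟩
  calc Nat.card {u : ℕ // u < k ∧ minimalPeriod f u = i + 1}
      = Nat.card (RepT k f (i+1) × Fin (i+1)) := (Nat.card_eq_of_bijective _ hbij).symm
    _ = Nat.card (RepT k f (i+1)) * (i + 1) := by
        rw [Nat.card_prod, Nat.card_eq_fintype_card (α := Fin (i+1)), Fintype.card_fin]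

theorem Good.card_mid (hf : Good n k f) (hkn : k ≤ n) :
    Nat.card {v : ℕ // k ≤ v ∧ v < n} =
      Nat.card (Σ i : ℕ, StartT k f (i+1)) + Nat.card (FreeT n k f) := by
  have hbij : Function.Bijective (fun x : (Σ i : ℕ, StartT k f (i+1)) ⊕ FreeT n k f =>
      (match x with
        | Sum.inl ⟨i, s⟩ => ⟨f^[i+1] s.1, (hf.path_end_val s).1, (hf.path_end_val s).2.1⟩
        | Sum.inr v => ⟨v.1, v.2.1⟩ : {v : ℕ // k ≤ v ∧ v < n})) := by
    constructor
    · rintro (⟨i, s⟩ | v) (⟨i', s'⟩ | v') hab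
      · have hval : f^[i+1] s.1 = f^[i'+1] s'.1 := by
          simpa [Subtype.ext_iff] using hab
        obtain ⟨h1, h2⟩ := hf.path_unique s.isStart s'.isStart (i+1) (i'+1)
          (by rw [s.exit_eq]) (by rw [s'.exit_eq]) hval
        have hii : i = i' := by omega
        subst hii
        simp only [Sum.inl.injEq, Sigma.mk.inj_iff, heq_eq_eq]
        exact ⟨trivial, Subtype.ext h1⟩
      · exfalso
        have hval : f^[i+1] s.1 = v'.1 := by simpa [Subtype.ext_iff] using hab
        obtain ⟨_, _, w, hw, hweq⟩ := hf.path_end_val s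
        exact v'.2.2 w hw (by rw [hweq, hval])
      · exfalso
        have hval : v.1 = f^[i'+1] s'.1 := by simpa [Subtype.ext_iff] using hab
        obtain ⟨_, _, w, hw, hweq⟩ := hf.path_end_val s'
        exact v.2.2 w hw (by rw [hweq, ← hval])
      · have hval : v.1 = v'.1 := by simpa [Subtype.ext_iff] using hab
        rw [show v = v' from Subtype.ext hval]
    · rintro ⟨u, hu, hun⟩
      by_cases him : ∃ w, w < k ∧ f w = u
      · obtain ⟨w, hw, hweq⟩ := him
        obtain ⟨s, hs, heq⟩ := hf.image_is_endpoint hu hw hweq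
        have hp0 : 0 < exit k f s := hf.exit_pos hs.1 (hf.start_not_per hs)
        refine ⟨Sum.inl ⟨exit k f s - 1,
          ⟨s, hs.1, hs.2, by show exit k f s = _; omega⟩⟩, ?_⟩
        apply Subtype.ext
        show f^[exit k f s - 1 + 1] s = u
        rw [show exit k f s - 1 + 1 = exit k f s by omega]
        exact heq
      · exact ⟨Sum.inr ⟨u, ⟨hu, hun⟩, fun w hw hweq => him ⟨w, hw, hweq⟩⟩, rfl⟩
  calc Nat.card {v : ℕ // k ≤ v ∧ v < n}
      = Nat.card ((Σ i : ℕ, StartT k f (i+1)) ⊕ FreeT n k f) :=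
        (Nat.card_eq_of_bijective _ hbij).symm
    _ = _ := Nat.card_sum

/-- The key conjugation lemma. -/
theorem key_conj (hkn : k ≤ n) (hf : Good n k f) (hg : Good n k g)
    (hcyc : ∀ i, Nat.card {u : ℕ // u < k ∧ minimalPeriod f u = i} =
      Nat.card {u : ℕ // u < k ∧ minimalPeriod g u = i})
    (hpath : ∀ i, Nat.card (StartT k f i) = Nat.card (StartT k g i)) :
    ∃ e : ℕ ≃ ℕ, (∀ u, e (f u) = g (e u)) ∧ (∀ u, u < k ↔ e u < k) ∧
      (∀ u, u < n ↔ e u < n) := by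
  have eR : ∀ i, RepT k f (i+1) ≃ RepT k g (i+1) := fun i => by
    apply Classical.choice
    apply Finite.card_eq.mp
    have h1 := hf.card_cyc i
    have h2 := hg.card_cyc i
    have h3 := hcyc (i + 1)
    have h4 : Nat.card (RepT k f (i+1)) * (i + 1) = Nat.card (RepT k g (i+1)) * (i + 1) := by
      rw [← h1, ← h2]; exact h3
    exact Nat.eq_of_mul_eq_mul_right (by omega) h4
  have eS : ∀ i, StartT k f (i+1) ≃ StartT k g (i+1) := fun i =>
    Classical.choice (Finite.card_eq.mp (hpath (i+1)))
  have eF : FreeT n k f ≃ FreeT n k g := by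
    apply Classical.choice
    apply Finite.card_eq.mp
    have h1 := hf.card_mid hkn
    have h2 := hg.card_mid hkn
    have h3 : Nat.card (Σ i : ℕ, StartT k f (i+1)) =
        Nat.card (Σ i : ℕ, StartT k g (i+1)) :=
      Nat.card_congr (Equiv.sigmaCongrRight fun i => eS i)
    omega
  set M : Idx n k f ≃ Idx n k g := mapIdx n k f g eR eS eF with hM
  set Ef : Idx n k f ≃ ℕ := Equiv.ofBijective (T n k f) ⟨hf.T_injective hkn, hf.T_surjective hkn⟩
  set Eg : Idx n k g ≃ ℕ := Equiv.ofBijective (T n k g) ⟨hg.T_injective hkn, hg.T_surjective hkn⟩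
  refine ⟨Ef.symm.trans (M.trans Eg), ?_, ?_, ?_⟩
  · intro u
    set x := Ef.symm u with hx
    have hu : T n k f x = u := Ef.apply_symm_apply u
    have h1 : f u = T n k f (shiftIdx n k f x) := by rw [hf.T_shift hkn, hu]
    have h2 : Ef.symm (f u) = shiftIdx n k f x := by
      rw [h1]; exact Ef.symm_apply_apply _
    show Eg (M (Ef.symm (f u))) = g (Eg (M x))
    rw [h2, mapIdx_shift]
    exact hg.T_shift hkn (M x)
  all_goals {
    intro u
    set x := Ef.symm u with hx
    have hu : T n k f x = u := Ef.apply_symm_apply u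
    have hcls : (T n k f x < k ↔ T n k g (M x) < k) ∧
        (T n k f x < n ↔ T n k g (M x) < n) := by
      clear hu
      rcases x with ⟨i, r, j⟩ | (⟨i, s, j⟩ | (v | v))
      · obtain ⟨h1, _, _⟩ := hf.cyc_val r j
        obtain ⟨h2, _, _⟩ := hg.cyc_val (eR i r) j
        have e1 : T n k f (Sum.inl ⟨i, r, j⟩) = f^[j.1] r.1 := rfl
        have e2 : T n k g (M (Sum.inl ⟨i, r, j⟩)) = g^[j.1] (eR i r).1 := rfl
        rw [e1, e2]
        constructor <;> constructor <;> intro <;> omega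
      · have e1 : T n k f (Sum.inr (Sum.inl ⟨i, s, j⟩)) = f^[j.1] s.1 := rfl
        have e2 : T n k g (M (Sum.inr (Sum.inl ⟨i, s, j⟩))) = g^[j.1] (eS i s).1 := rfl
        rw [e1, e2]
        rcases le_or_gt j.1 i with hle | hlt
        · obtain ⟨h1, _⟩ := hf.path_val s hle
          obtain ⟨h2, _⟩ := hg.path_val (eS i s) hle
          constructor <;> constructor <;> intro <;> omega
        · have hj : j.1 = i + 1 := by omega
          obtain ⟨h1, h1', _⟩ := hf.path_end_val s
          obtain ⟨h2, h2', _⟩ := hg.path_end_val (eS i s)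
          rw [hj]
          constructor <;> constructor <;> intro <;> omega
      · have e1 : T n k f (Sum.inr (Sum.inr (Sum.inl v))) = v.1 := rfl
        have e2 : T n k g (M (Sum.inr (Sum.inr (Sum.inl v)))) = (eF v).1 := rfl
        rw [e1, e2]
        have := v.2.1
        have := (eF v).2.1
        constructor <;> constructor <;> intro <;> omega
      · have e1 : T n k f (Sum.inr (Sum.inr (Sum.inr v))) = v.1 := rfl
        have e2 : T n k g (M (Sum.inr (Sum.inr (Sum.inr v)))) = v.1 := rfl
        rw [e1, e2]
        have := v.2
        constructor <;> constructor <;> intro <;> omega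
    have h4 : (Ef.symm.trans (M.trans Eg)) u = T n k g (M x) := rfl
    rw [h4, ← hu]
    first
      | exact hcls.1
      | exact hcls.2
  }


section Transfer

variable {F G : ℕ → ℕ} {e : ℕ ≃ ℕ}

theorem conj_iterate (hFG : ∀ u, F (e u) = e (G u)) (m u : ℕ) :
    F^[m] (e u) = e (G^[m] u) := by
  induction m generalizing u with
  | zero => rfl
  | succ p ih =>
    rw [Function.iterate_succ_apply, Function.iterate_succ_apply, hFG, ih]

theorem conj_minimalPeriod (hFG : ∀ u, F (e u) = e (G u)) (u : ℕ) :
    minimalPeriod F (e u) = minimalPeriod G u := by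
  have hiff : ∀ m, IsPeriodicPt F m (e u) ↔ IsPeriodicPt G m u := by
    intro m
    constructor
    · intro hm
      have : F^[m] (e u) = e u := hm
      rw [conj_iterate hFG] at this
      exact e.injective this
    · intro hm
      show F^[m] (e u) = e u
      rw [conj_iterate hFG]
      exact congrArg e hm
  by_cases hp : u ∈ periodicPts G
  · have hp0 : 0 < minimalPeriod G u := minimalPeriod_pos_iff_mem_periodicPts.2 hp
    have hpe : e u ∈ periodicPts F := by
      obtain ⟨p, hpp, hper⟩ := hp
      exact ⟨p, hpp, (hiff p).2 hper⟩
    have hp0' : 0 < minimalPeriod F (e u) := minimalPeriod_pos_iff_mem_periodicPts.2 hpe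
    apply le_antisymm
    · exact IsPeriodicPt.minimalPeriod_le hp0 ((hiff _).2 (isPeriodicPt_minimalPeriod G u))
    · exact IsPeriodicPt.minimalPeriod_le hp0' ((hiff _).1 (isPeriodicPt_minimalPeriod F (e u)))
  · have hpe : e u ∉ periodicPts F := by
      rintro ⟨p, hpp, hper⟩
      exact hp ⟨p, hpp, (hiff p).1 hper⟩
    rw [minimalPeriod_eq_zero_of_notMem_periodicPts hpe,
      minimalPeriod_eq_zero_of_notMem_periodicPts hp]

theorem count_transfer (e : ℕ ≃ ℕ) (hk : ∀ u, u < k ↔ e u < k) (F G : ℕ → ℕ)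
    (hFG : ∀ u, F (e u) = e (G u)) :
    (∀ i, Nat.card {u : ℕ // u < k ∧ minimalPeriod F u = i} =
      Nat.card {u : ℕ // u < k ∧ minimalPeriod G u = i}) ∧
    (∀ i, Nat.card {u : ℕ // u < k ∧ (∀ w, w < k → F w ≠ u) ∧
        sInf {ℓ : ℕ | k ≤ F^[ℓ] u} = i} =
      Nat.card {u : ℕ // u < k ∧ (∀ w, w < k → G w ≠ u) ∧
        sInf {ℓ : ℕ | k ≤ G^[ℓ] u} = i}) := by
  have hk' : ∀ u, u < k ↔ e.symm u < k := by
    intro u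
    have := hk (e.symm u)
    rw [e.apply_symm_apply] at this
    exact this.symm
  have hmp : ∀ u, minimalPeriod F u = minimalPeriod G (e.symm u) := by
    intro u
    have := conj_minimalPeriod hFG (e.symm u)
    rw [e.apply_symm_apply] at this
    exact this
  have himg : ∀ u, (∀ w, w < k → F w ≠ u) ↔ (∀ w, w < k → G w ≠ e.symm u) := by
    intro u
    constructor
    · intro hF w hw hGw
      refine hF (e w) ((hk w).1 hw) ?_
      rw [hFG, hGw, e.apply_symm_apply]
    · intro hG w hw hFw
      refine hG (e.symm w) ((hk' w).1 hw) ?_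
      apply e.injective
      rw [← hFG, e.apply_symm_apply, hFw, e.apply_symm_apply]
  have hinf : ∀ u, {ℓ : ℕ | k ≤ F^[ℓ] u} = {ℓ : ℕ | k ≤ G^[ℓ] (e.symm u)} := by
    intro u
    ext ℓ
    simp only [Set.mem_setOf_eq]
    have h1 : F^[ℓ] u = e (G^[ℓ] (e.symm u)) := by
      rw [← conj_iterate hFG, e.apply_symm_apply]
    rw [h1]
    have := hk (G^[ℓ] (e.symm u))
    omega
  constructor
  · intro i
    apply Nat.card_congr
    refine Equiv.subtypeEquiv e.symm ?_
    intro u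
    rw [hmp u]
    exact and_congr (hk' u) Iff.rfl
  · intro i
    apply Nat.card_congr
    refine Equiv.subtypeEquiv e.symm ?_
    intro u
    rw [hinf u]
    exact and_congr (hk' u) (and_congr (himg u) Iff.rfl)

end Transfer

end AG

/-- If `π` and `ρ` have the same cycle type, then for every cycle type (represented by a
`k`-permutation `τ`), `π` and `ρ` have the same number of neighbors of that cycle type
in the arrangement graph `A(n,k)`. -/
theorem card_neighbors_of_cycleType_eq (n k : ℕ) (hkn : k ≤ n)
    (π ρ : {π : Fin k → Fin n // Function.Injective π}) (h : SameCycleType π.1 ρ.1)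
    (τ : {π : Fin k → Fin n // Function.Injective π}) :
    Nat.card {ζ // (arrangementGraph n k).Adj π ζ ∧ SameCycleType ζ.1 τ.1} =
      Nat.card {ζ // (arrangementGraph n k).Adj ρ ζ ∧ SameCycleType ζ.1 τ.1} := by
  classical
  have good : ∀ (ζ : {π : Fin k → Fin n // Function.Injective π}),
      AG.Good n k (extFun ζ.1) := by
    intro ζ
    refine ⟨fun u hu => ?_, fun u hu => ?_, fun u v hu hv heq => ?_⟩
    · simp [extFun, Nat.not_lt.2 hu]
    · simp only [extFun, dif_pos hu]
      exact (ζ.1 ⟨u, hu⟩).2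
    · simp only [extFun, dif_pos hu, dif_pos hv] at heq
      have h2 : (⟨u, hu⟩ : Fin k) = ⟨v, hv⟩ := ζ.2 (Fin.ext heq)
      simpa using congrArg Fin.val h2
  obtain ⟨e, hconj, hek, hen⟩ := AG.key_conj hkn (good π) (good ρ)
    (fun i => (h i).1) (fun i => (h i).2)
  let e0 : Fin k ≃ Fin k :=
    { toFun := fun v => ⟨e v.1, (hek v.1).1 v.2⟩
      invFun := fun v => ⟨e.symm v.1, by
        have hh := hek (e.symm v.1)
        rw [e.apply_symm_apply] at hh
        exact hh.2 v.2⟩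
      left_inv := fun v => Fin.ext (by simp)
      right_inv := fun v => Fin.ext (by simp) }
  let eN : Fin n ≃ Fin n :=
    { toFun := fun v => ⟨e v.1, (hen v.1).1 v.2⟩
      invFun := fun v => ⟨e.symm v.1, by
        have hh := hen (e.symm v.1)
        rw [e.apply_symm_apply] at hh
        exact hh.2 v.2⟩
      left_inv := fun v => Fin.ext (by simp)
      right_inv := fun v => Fin.ext (by simp) }
  let Φ : {π : Fin k → Fin n // Function.Injective π} ≃
      {π : Fin k → Fin n // Function.Injective π} :=
    { toFun := fun ζ => ⟨fun i => eN (ζ.1 (e0.symm i)),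
        fun a b hab => e0.symm.injective (ζ.2 (eN.injective hab))⟩
      invFun := fun ζ => ⟨fun i => eN.symm (ζ.1 (e0 i)),
        fun a b hab => e0.injective (ζ.2 (eN.symm.injective hab))⟩
      left_inv := fun ζ => Subtype.ext (funext fun i => by simp)
      right_inv := fun ζ => Subtype.ext (funext fun i => by simp) }
  have hext : ∀ ζ : {π : Fin k → Fin n // Function.Injective π}, ∀ u,
      extFun ((Φ ζ).1) u = e (extFun ζ.1 (e.symm u)) := by
    intro ζ u
    by_cases hu : u < k
    · have hu' : e.symm u < k := by
        have hh := hek (e.symm u); rw [e.apply_symm_apply] at hh; exact hh.2 hu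
      simp only [extFun, dif_pos hu, dif_pos hu']
      rfl
    · have hu' : ¬ e.symm u < k := by
        have hh := hek (e.symm u); rw [e.apply_symm_apply] at hh
        exact fun hc => hu (hh.1 hc)
      simp only [extFun, dif_neg hu, dif_neg hu']
      rw [e.apply_symm_apply]
  have hΦπ : Φ π = ρ := by
    have hptw : ∀ u, extFun ((Φ π).1) u = extFun ρ.1 u := by
      intro u
      rw [hext]
      have h1 := hconj (e.symm u)
      rw [e.apply_symm_apply] at h1
      exact h1
    apply Subtype.ext
    funext i
    apply Fin.ext
    have h2 := hptw i.1
    simp only [extFun, dif_pos i.2] at h2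
    simpa using h2
  have hsct : ∀ ζ : {π : Fin k → Fin n // Function.Injective π},
      SameCycleType ((Φ ζ).1) ζ.1 := by
    intro ζ
    have hFG : ∀ u, extFun ((Φ ζ).1) (e u) = e (extFun ζ.1 u) := by
      intro u
      rw [hext, e.symm_apply_apply]
    obtain ⟨h1, h2⟩ := AG.count_transfer e hek (extFun ((Φ ζ).1)) (extFun ζ.1) hFG
    exact fun i => ⟨h1 i, h2 i⟩
  have hadj : ∀ a b : {π : Fin k → Fin n // Function.Injective π},
      (arrangementGraph n k).Adj a b ↔ (arrangementGraph n k).Adj (Φ a) (Φ b) := by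
    intro a b
    show (∃! i, a.1 i ≠ b.1 i) ↔ ∃! i, (Φ a).1 i ≠ (Φ b).1 i
    calc (∃! i, a.1 i ≠ b.1 i)
        ↔ (∃! i, a.1 (e0.symm i) ≠ b.1 (e0.symm i)) := e0.existsUnique_congr_left
      _ ↔ (∃! i, (Φ a).1 i ≠ (Φ b).1 i) :=
          existsUnique_congr fun i => (eN.injective.ne_iff).symm
  apply Nat.card_congr
  refine Equiv.subtypeEquiv Φ ?_
  intro ζ
  have hA : (arrangementGraph n k).Adj π ζ ↔ (arrangementGraph n k).Adj ρ (Φ ζ) := by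
    rw [← hΦπ]; exact hadj π ζ
  have hS : SameCycleType ζ.1 τ.1 ↔ SameCycleType ((Φ ζ).1) τ.1 := by
    constructor
    · intro hz i
      exact ⟨((hsct ζ) i).1.trans (hz i).1, ((hsct ζ) i).2.trans (hz i).2⟩
    · intro hz i
      exact ⟨((hsct ζ) i).1.symm.trans (hz i).1, ((hsct ζ) i).2.symm.trans (hz i).2⟩
  exact and_congr hA hS
end

section
/- The arrangement graph A(n,2) is isomorphic to the line graph of the graph H_n obtained from the complete bipartite graph K_{n,n} by removing a perfect matching. -/
attribute [local instance] Classical.propDecidable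

/-- The graph `Hₙ` obtained from the complete bipartite graph `K_{n,n}` by removing a
perfect matching: vertices `aᵢ = (0,i)` and `bⱼ = (1,j)`, with `aᵢ ~ bⱼ` iff `i ≠ j`. -/
def matchingRemoved (n : ℕ) : SimpleGraph (Fin 2 × Fin n) where
  Adj p q := p.1 ≠ q.1 ∧ p.2 ≠ q.2
  symm := by constructor; rintro p q ⟨h1, h2⟩; exact ⟨h1.symm, h2.symm⟩
  loopless := by constructor; rintro p ⟨h, -⟩; exact h rfl

section Aux

variable {n : ℕ}

lemma existsUnique_fin_two {π ρ : Fin 2 → Fin n} :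
    (∃! i, π i ≠ ρ i) ↔ ((π 0 ≠ ρ 0 ∧ π 1 = ρ 1) ∨ (π 0 = ρ 0 ∧ π 1 ≠ ρ 1)) := by
  constructor
  · rintro ⟨i, hi, hu⟩
    fin_cases i
    · left; refine ⟨hi, ?_⟩
      by_contra h1
      exact absurd (hu 1 h1) (by decide)
    · right; refine ⟨?_, hi⟩
      by_contra h0
      exact absurd (hu 0 h0) (by decide)
  · rintro (⟨h0, h1⟩ | ⟨h0, h1⟩)
    · exact ⟨0, h0, fun j hj => by fin_cases j <;> simp_all⟩
    · exact ⟨1, h1, fun j hj => by fin_cases j <;> simp_all⟩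

def arrToEdge (n : ℕ) (π : {π : Fin 2 → Fin n // Function.Injective π}) :
    (matchingRemoved n).edgeSet :=
  ⟨s((0, π.1 0), (1, π.1 1)), by
    rw [SimpleGraph.mem_edgeSet]
    exact ⟨by simp, π.2.ne (by decide)⟩⟩

lemma arrToEdge_inj : Function.Injective (arrToEdge n) := by
  rintro π ρ h
  have h' := congrArg Subtype.val h
  simp only [arrToEdge, Sym2.eq, Sym2.rel_iff', Prod.mk.injEq, Prod.swap_prod_mk] at h'
  rcases h' with ⟨⟨-, h0⟩, ⟨-, h1⟩⟩ | ⟨⟨h0, -⟩, -⟩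
  · exact Subtype.ext (funext fun i => by fin_cases i <;> assumption)
  · exact absurd h0 (by decide)

lemma arrToEdge_surj : Function.Surjective (arrToEdge n) := by
  rintro ⟨e, he⟩
  induction e using Sym2.ind with
  | _ p q =>
    rw [SimpleGraph.mem_edgeSet] at he
    obtain ⟨h1, h2⟩ := he
    have hinj : ∀ a b : Fin n, a ≠ b → Function.Injective (![a, b]) := by
      intro a b hab i j hij
      fin_cases i <;> fin_cases j <;> simp_all
    obtain ⟨p1, p2⟩ := p
    obtain ⟨q1, q2⟩ := q
    simp only at h1 h2
    fin_cases p1 <;> fin_cases q1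
    · exact absurd rfl h1
    · refine ⟨⟨![p2, q2], hinj _ _ h2⟩, ?_⟩
      simp [arrToEdge]
    · refine ⟨⟨![q2, p2], hinj _ _ (Ne.symm h2)⟩, ?_⟩
      simp only [arrToEdge, Subtype.mk.injEq]
      rw [Sym2.eq_swap]
      simp
    · exact absurd rfl h1

end Aux

/-- `A(n,2)` is isomorphic to the line graph of `Hₙ`. -/
theorem arrangementGraph_two_iso_lineGraph (n : ℕ) :
    Nonempty (arrangementGraph n 2 ≃g (matchingRemoved n).lineGraph) := by
  refine ⟨⟨Equiv.ofBijective (arrToEdge n) ⟨arrToEdge_inj, arrToEdge_surj⟩, ?_⟩⟩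
  rintro π ρ
  show (matchingRemoved n).lineGraph.Adj (arrToEdge n π) (arrToEdge n ρ) ↔ _
  rw [SimpleGraph.lineGraph_adj_iff_exists]
  show _ ↔ ∃! i, π.1 i ≠ ρ.1 i
  rw [existsUnique_fin_two]
  constructor
  · rintro ⟨hne, v, hv1, hv2⟩
    simp only [arrToEdge, Sym2.mem_iff] at hv1 hv2
    have hne' : π ≠ ρ := fun h => hne (congrArg _ h)
    rcases hv1 with rfl | rfl <;> rcases hv2 with h | h <;>
      simp only [Prod.mk.injEq] at h
    · obtain ⟨-, h0⟩ := h
      rcases eq_or_ne (π.1 1) (ρ.1 1) with h1 | h1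
      · exact absurd (Subtype.ext (funext fun i => by fin_cases i <;> simp_all)) hne'
      · exact Or.inr ⟨h0, h1⟩
    · exact absurd h.1 (by decide)
    · exact absurd h.1 (by decide)
    · obtain ⟨-, h1⟩ := h
      rcases eq_or_ne (π.1 0) (ρ.1 0) with h0 | h0
      · exact absurd (Subtype.ext (funext fun i => by fin_cases i <;> simp_all)) hne'
      · exact Or.inl ⟨h0, h1⟩
  · rintro (⟨h0, h1⟩ | ⟨h0, h1⟩)
    · refine ⟨fun h => h0 ?_, ⟨(1, π.1 1), by simp [arrToEdge], by simp [arrToEdge, h1]⟩⟩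
      have := arrToEdge_inj h
      exact congrFun (congrArg Subtype.val this) 0
    · refine ⟨fun h => h1 ?_, ⟨(0, π.1 0), by simp [arrToEdge], by simp [arrToEdge, h0]⟩⟩
      have := arrToEdge_inj h
      exact congrFun (congrArg Subtype.val this) 1
end

section
/- For n ≥ 3, the eigenvalues of the arrangement graph A(n,2) are: 2n-4 with multiplicity 1, n-2 with multiplicity n-1, n-4 with multiplicity n-1, and -2 with multiplicity n²-3n+1. -/
attribute [local instance] Classical.propDecidable

open Polynomial Matrix Finset

namespace AGaux

variable (n : ℕ)

abbrev V := {π : Fin 2 → Fin n // Function.Injective π}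

lemma ne01 (v : V n) : v.1 0 ≠ v.1 1 := fun h => by simpa using v.2 h

lemma inj_pair {a b : Fin n} (h : a ≠ b) : Function.Injective ![a, b] := by
  intro i j hij
  fin_cases i <;> fin_cases j <;> simp_all

/-- Equivalence with pairs. -/
def e : V n ≃ {p : Fin n × Fin n // p.1 ≠ p.2} where
  toFun v := ⟨(v.1 0, v.1 1), ne01 n v⟩
  invFun p := ⟨![p.1.1, p.1.2], inj_pair n p.2⟩
  left_inv v := by
    ext i
    fin_cases i <;> simp
  right_inv p := by simp

lemma sum_V (f : Fin n → Fin n → ℝ) :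
    ∑ v : V n, f (v.1 0) (v.1 1) = ∑ k : Fin n, ∑ l : Fin n, if k ≠ l then f k l else 0 := by
  have h1 := Fintype.sum_equiv (e n) (fun v => f (v.1 0) (v.1 1))
    (fun q => f q.1.1 q.1.2) (fun v => rfl)
  rw [h1, ← Finset.sum_subtype (Finset.univ.filter fun p : Fin n × Fin n => p.1 ≠ p.2)
      (fun p => by simp) (fun p => f p.1 p.2)]
  rw [Finset.sum_filter, Fintype.sum_prod_type]

lemma sum_ite_ne (k : Fin n) : ∑ l : Fin n, (if k ≠ l then (1:ℝ) else 0) = n - 1 := by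
  have : ∀ l : Fin n, (if k ≠ l then (1:ℝ) else 0) = 1 - if k = l then 1 else 0 := by
    intro l; by_cases h : k = l <;> simp [h]
  simp only [this, Finset.sum_sub_distrib, Finset.sum_const, Finset.card_univ,
    Fintype.card_fin, nsmul_eq_mul, mul_one, Finset.sum_ite_eq, Finset.mem_univ, if_true]

lemma card_V : (Fintype.card (V n) : ℝ) = n^2 - n := by
  have h := sum_V n (fun _ _ => (1 : ℝ))
  simp only [Finset.sum_const, Finset.card_univ, nsmul_eq_mul, mul_one] at h
  rw [h, Finset.sum_congr rfl (fun k _ => sum_ite_ne n k), Finset.sum_const,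
    Finset.card_univ, Fintype.card_fin, nsmul_eq_mul]
  ring

lemma cnt_row (a : Fin n) :
    ∑ v : V n, (if v.1 0 = a then (1:ℝ) else 0) = n - 1 := by
  rw [sum_V n (fun k l => if k = a then (1:ℝ) else 0)]
  have : ∀ k : Fin n, (∑ l : Fin n, if k ≠ l then (if k = a then (1:ℝ) else 0) else 0)
      = if k = a then ((n:ℝ) - 1) else 0 := by
    intro k
    by_cases h : k = a
    · simp only [h, if_true]
      simpa using sum_ite_ne n a
    · simp [h]
  rw [Finset.sum_congr rfl (fun k _ => this k)]
  simp [Finset.sum_ite_eq']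

lemma cnt_col (a : Fin n) :
    ∑ v : V n, (if v.1 1 = a then (1:ℝ) else 0) = n - 1 := by
  rw [sum_V n (fun k l => if l = a then (1:ℝ) else 0)]
  have : ∀ k : Fin n, (∑ l : Fin n, if k ≠ l then (if l = a then (1:ℝ) else 0) else 0)
      = if k = a then 0 else 1 := by
    intro k
    have : ∀ l : Fin n, (if k ≠ l then (if l = a then (1:ℝ) else 0) else 0)
        = if l = a then (if k = a then (0:ℝ) else 1) else 0 := by
      intro l
      by_cases h1 : l = a <;> by_cases h2 : k = l <;> simp_all
    rw [Finset.sum_congr rfl (fun l _ => this l)]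
    simp [Finset.sum_ite_eq']
  rw [Finset.sum_congr rfl (fun k _ => this k)]
  have : ∀ k : Fin n, (if k = a then (0:ℝ) else 1) = 1 - if k = a then 1 else 0 := by
    intro k; by_cases h : k = a <;> simp [h]
  simp only [this, Finset.sum_sub_distrib, Finset.sum_const, Finset.card_univ,
    Fintype.card_fin, nsmul_eq_mul, mul_one, Finset.sum_ite_eq', Finset.mem_univ, if_true]

lemma cnt_pair (a b : Fin n) :
    ∑ v : V n, (if v.1 0 = a then (1:ℝ) else 0) * (if v.1 1 = b then 1 else 0)
      = if a = b then 0 else 1 := by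
  rw [sum_V n (fun k l => (if k = a then (1:ℝ) else 0) * (if l = b then 1 else 0))]
  have : ∀ k l : Fin n, (if k ≠ l then (if k = a then (1:ℝ) else 0) * (if l = b then 1 else 0) else 0)
      = if k = a then (if l = b then (if a = b then (0:ℝ) else 1) else 0) else 0 := by
    intro k l
    by_cases h1 : k = a <;> by_cases h2 : l = b <;> by_cases h3 : k = l <;> simp_all
  simp only [this]
  have h2 : ∀ k : Fin n, (∑ l : Fin n, if k = a then (if l = b then (if a = b then (0:ℝ) else 1) else 0) else 0)
      = if k = a then (if a = b then (0:ℝ) else 1) else 0 := by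
    intro k
    by_cases h : k = a <;> simp [h, Finset.sum_ite_eq']
  rw [Finset.sum_congr rfl (fun k _ => h2 k)]
  simp [Finset.sum_ite_eq']

lemma cnt_coord (t : Fin 2) (a : Fin n) :
    ∑ v : V n, (if v.1 t = a then (1:ℝ) else 0) = n - 1 := by
  fin_cases t
  · simpa using cnt_row n a
  · simpa using cnt_col n a

/-- the basic indicator matrices -/
noncomputable def M (s t : Fin 2) : Matrix (V n) (V n) ℝ :=
  Matrix.of fun v w => if v.1 s = w.1 t then 1 else 0

noncomputable def Jm : Matrix (V n) (V n) ℝ := Matrix.of fun _ _ => 1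

lemma master1 (s t u2 : Fin 2) : M n s t * M n t u2 = ((n:ℝ) - 1) • M n s u2 := by
  ext v w
  rw [Matrix.mul_apply]
  simp only [M, Matrix.of_apply, Matrix.smul_apply, smul_eq_mul]
  by_cases h : v.1 s = w.1 u2
  · have h1 : ∀ u : V n, (if v.1 s = u.1 t then (1:ℝ) else 0) * (if u.1 t = w.1 u2 then 1 else 0)
        = if u.1 t = v.1 s then 1 else 0 := by
      intro u
      by_cases h2 : u.1 t = v.1 s <;> simp_all [eq_comm]
    rw [Finset.sum_congr rfl fun u _ => h1 u, cnt_coord n t (v.1 s)]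
    simp [h]
  · have h1 : ∀ u : V n, (if v.1 s = u.1 t then (1:ℝ) else 0) * (if u.1 t = w.1 u2 then 1 else 0)
        = 0 := by
      intro u
      by_cases h2 : u.1 t = v.1 s
      · by_cases h3 : u.1 t = w.1 u2
        · exact absurd (h2.symm.trans h3) h
        · simp [h3]
      · have hx : ¬ v.1 s = u.1 t := fun hh => h2 hh.symm
        simp [hx]
    rw [Finset.sum_congr rfl fun u _ => h1 u]
    simp [h]

lemma masterA (s u2 : Fin 2) : M n s 0 * M n 1 u2 = Jm n - M n s u2 := by
  ext v w
  rw [Matrix.mul_apply]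
  simp only [M, Jm, Matrix.of_apply, Matrix.sub_apply]
  have h1 : ∀ u : V n, (if v.1 s = u.1 0 then (1:ℝ) else 0) * (if u.1 1 = w.1 u2 then 1 else 0)
      = (if u.1 0 = v.1 s then (1:ℝ) else 0) * (if u.1 1 = w.1 u2 then 1 else 0) := by
    intro u; rw [if_congr eq_comm rfl rfl]
  rw [Finset.sum_congr rfl fun u _ => h1 u, cnt_pair n (v.1 s) (w.1 u2)]
  by_cases h : v.1 s = w.1 u2 <;> simp [h]

lemma masterB (s u2 : Fin 2) : M n s 1 * M n 0 u2 = Jm n - M n s u2 := by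
  ext v w
  rw [Matrix.mul_apply]
  simp only [M, Jm, Matrix.of_apply, Matrix.sub_apply]
  have h1 : ∀ u : V n, (if v.1 s = u.1 1 then (1:ℝ) else 0) * (if u.1 0 = w.1 u2 then 1 else 0)
      = (if u.1 0 = w.1 u2 then (1:ℝ) else 0) * (if u.1 1 = v.1 s then 1 else 0) := by
    intro u; rw [if_congr eq_comm rfl rfl, mul_comm]
  rw [Finset.sum_congr rfl fun u _ => h1 u, cnt_pair n (w.1 u2) (v.1 s)]
  by_cases h : v.1 s = w.1 u2 <;> simp [h, eq_comm]

lemma masterJ (s t : Fin 2) : M n s t * Jm n = ((n:ℝ) - 1) • Jm n := by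
  ext v w
  rw [Matrix.mul_apply]
  simp only [M, Jm, Matrix.of_apply, Matrix.smul_apply, smul_eq_mul, mul_one]
  have h1 : ∀ u : V n, (if v.1 s = u.1 t then (1:ℝ) else 0)
      = (if u.1 t = v.1 s then (1:ℝ) else 0) := by
    intro u; rw [if_congr eq_comm rfl rfl]
  rw [Finset.sum_congr rfl fun u _ => h1 u, cnt_coord n t (v.1 s)]


noncomputable def S : Matrix (V n) (V n) ℝ := M n 0 0 + M n 1 1
noncomputable def Em : Matrix (V n) (V n) ℝ := M n 0 1 + M n 1 0

noncomputable def Am : Matrix (V n) (V n) ℝ := (arrangementGraph n 2).adjMatrix ℝ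

lemma hAS : Am n = S n - 2 • (1 : Matrix (V n) (V n) ℝ) := by
  ext v w
  simp only [Am, SimpleGraph.adjMatrix_apply, S, M, Matrix.sub_apply, Matrix.add_apply,
    Matrix.of_apply, Matrix.smul_apply, Matrix.one_apply, smul_eq_mul]
  by_cases h0 : v.1 0 = w.1 0 <;> by_cases h1 : v.1 1 = w.1 1
  · have hvw : v = w := by
      apply Subtype.ext; funext i
      fin_cases i
      · exact h0
      · exact h1
    have hadj : ¬ (arrangementGraph n 2).Adj v w := by
      subst hvw; exact (arrangementGraph n 2).loopless.irrefl v
    simp [hadj, hvw, h0, h1]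
    norm_num
  · have hvw : v ≠ w := fun h => h1 (by rw [h])
    have hadj : (arrangementGraph n 2).Adj v w := by
      refine ⟨1, h1, fun j hj => ?_⟩
      fin_cases j
      · exact absurd h0 hj
      · rfl
    simp [hadj, hvw, h0, h1]
  · have hvw : v ≠ w := fun h => h0 (by rw [h])
    have hadj : (arrangementGraph n 2).Adj v w := by
      refine ⟨0, h0, fun j hj => ?_⟩
      fin_cases j
      · rfl
      · exact absurd h1 hj
    simp [hadj, hvw, h0, h1]
  · have hvw : v ≠ w := fun h => h0 (by rw [h])
    have hadj : ¬ (arrangementGraph n 2).Adj v w := by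
      rintro ⟨i, hi, hu⟩
      have e0 : (0 : Fin 2) = i := hu 0 h0
      have e1 : (1 : Fin 2) = i := hu 1 h1
      rw [← e0] at e1
      exact absurd e1.symm (by simp)
    simp [hadj, hvw, h0, h1]

lemma hSS : S n * S n = ((n:ℝ) - 1) • S n + 2 • Jm n - Em n := by
  simp only [S, add_mul, mul_add, master1 n 0 0 0, master1 n 1 1 1,
    masterA n 0 1, masterB n 1 0, Em]
  module

lemma hSJ : S n * Jm n = (2*(n:ℝ) - 2) • Jm n := by
  simp only [S, add_mul, masterJ]
  module

lemma hSE : S n * Em n = ((n:ℝ) - 1) • Em n + 2 • Jm n - S n := by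
  simp only [S, Em, add_mul, mul_add, master1 n 0 0 1, master1 n 1 1 0,
    masterA n 0 0, masterB n 1 1]
  module

lemma hp : (Am n - (2*(n:ℝ)-4) • 1) * ((Am n - ((n:ℝ)-2) • 1) *
    ((Am n - ((n:ℝ)-4) • 1) * (Am n + 2 • 1))) = 0 := by
  have e1 : (Am n - ((n:ℝ)-4) • 1) * (Am n + 2 • 1) = S n + 2 • Jm n - Em n := by
    rw [hAS]
    have r1 : S n - 2 • (1 : Matrix (V n) (V n) ℝ) - ((n:ℝ)-4) • 1 = S n - ((n:ℝ)-2) • 1 := by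
      module
    have r2 : S n - 2 • (1 : Matrix (V n) (V n) ℝ) + 2 • 1 = S n := by module
    rw [r1, r2, sub_mul, smul_mul_assoc, one_mul, hSS]
    module
  have e2 : (Am n - ((n:ℝ)-2) • 1) * (S n + 2 • Jm n - Em n) = (2*(n:ℝ)-4) • Jm n := by
    rw [hAS]
    have r1 : S n - 2 • (1 : Matrix (V n) (V n) ℝ) - ((n:ℝ)-2) • 1 = S n - (n:ℝ) • 1 := by
      module
    rw [r1, sub_mul, smul_mul_assoc, one_mul, mul_sub, mul_add, mul_smul_comm, hSS, hSJ, hSE]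
    module
  have e3 : (Am n - (2*(n:ℝ)-4) • 1) * ((2*(n:ℝ)-4) • Jm n) = 0 := by
    rw [hAS]
    have r1 : S n - 2 • (1 : Matrix (V n) (V n) ℝ) - (2*(n:ℝ)-4) • 1
        = S n - (2*(n:ℝ)-2) • 1 := by module
    rw [r1, sub_mul, smul_mul_assoc, one_mul, mul_smul_comm, hSJ]
    module
  rw [e1, e2, e3]

lemma hAJ : Am n * Jm n = (2*(n:ℝ)-4) • Jm n := by
  rw [hAS, sub_mul, smul_mul_assoc, one_mul, hSJ]
  module

lemma hAE : Am n * Em n = ((n:ℝ)-3) • Em n + 2 • Jm n - Am n - 2 • 1 := by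
  rw [hAS, sub_mul, smul_mul_assoc, one_mul, hSE]
  module

lemma hA2 : Am n * Am n = (2*(n:ℝ)-6) • 1 + ((n:ℝ)-5) • Am n + 2 • Jm n - Em n := by
  have h : (S n - 2 • (1 : Matrix (V n) (V n) ℝ)) * (S n - 2 • 1)
      = S n * S n - 2 • S n - 2 • (S n - 2 • 1) := by
    rw [sub_mul, mul_sub, smul_mul_assoc, mul_smul_comm, one_mul, mul_one]
  rw [hAS, h, hSS]
  module

lemma trJ : (Jm n).trace = (n:ℝ)^2 - n := by
  have : (Jm n).trace = ∑ _v : V n, (1:ℝ) := rfl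
  rw [this]
  simp only [Finset.sum_const, Finset.card_univ, nsmul_eq_mul, mul_one]
  exact card_V n

lemma trE : (Em n).trace = 0 := by
  have : (Em n).trace = ∑ v : V n,
      ((if v.1 0 = v.1 1 then (1:ℝ) else 0) + (if v.1 1 = v.1 0 then (1:ℝ) else 0)) := rfl
  rw [this]
  apply Finset.sum_eq_zero
  intro v _
  simp [ne01 n v, (ne01 n v).symm]

lemma tr1 : (1 : Matrix (V n) (V n) ℝ).trace = (n:ℝ)^2 - n := by
  rw [Matrix.trace_one]
  exact card_V n

lemma trA : (Am n).trace = 0 := by simp [Am]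

lemma trA2 : (Am n * Am n).trace = (2*(n:ℝ)-4)*((n:ℝ)^2-n) := by
  rw [hA2]
  rw [Matrix.trace_sub, Matrix.trace_add, Matrix.trace_add, Matrix.trace_smul,
    Matrix.trace_smul, Matrix.trace_smul, trJ, trE, tr1, trA]
  simp only [smul_eq_mul]
  ring

lemma trA3 : (Am n * (Am n * Am n)).trace = (2*(n:ℝ)-4)*((n:ℝ)-3)*((n:ℝ)^2-n) := by
  rw [hA2, mul_sub, mul_add, mul_add, mul_smul_comm, mul_smul_comm, mul_smul_comm,
    mul_one, hAJ, hAE, hA2]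
  rw [show ((2*(n:ℝ)-6) • Am n + ((n:ℝ)-5) • ((2*(n:ℝ)-6) • 1 + ((n:ℝ)-5) • Am n
      + 2 • Jm n - Em n) + 2 • (2*(n:ℝ)-4) • Jm n
      - (((n:ℝ)-3) • Em n + 2 • Jm n - Am n - 2 • 1))
    = (2*(n:ℝ)^2-16*(n:ℝ)+32) • (1 : Matrix (V n) (V n) ℝ)
      + (((n:ℝ)-5)*((n:ℝ)-5) + (2*(n:ℝ)-6) + 1) • Am n
      + (((n:ℝ)-5)*2 + 2*(2*(n:ℝ)-4) - 2) • Jm n + (-((n:ℝ)-5) - ((n:ℝ)-3)) • Em n from by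
      module]
  rw [Matrix.trace_add, Matrix.trace_add, Matrix.trace_add, Matrix.trace_smul,
    Matrix.trace_smul, Matrix.trace_smul, Matrix.trace_smul, trJ, trE, tr1, trA]
  simp only [smul_eq_mul]
  ring
lemma hHerm : (Am n).IsHermitian := by
  unfold Matrix.IsHermitian
  ext v w
  simp only [Am, Matrix.conjTranspose_apply, SimpleGraph.adjMatrix_apply, star_trivial]
  by_cases h : (arrangementGraph n 2).Adj v w
  · simp [h, h.symm]
  · simp [h, show ¬(arrangementGraph n 2).Adj w v from fun hh => h hh.symm]

noncomputable def Ue : Matrix (V n) (V n) ℝ := ((hHerm n).eigenvectorUnitary : Matrix (V n) (V n) ℝ)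
noncomputable def eig : V n → ℝ := (hHerm n).eigenvalues

lemma hU1 : Ue n * star (Ue n) = 1 := by
  have := Unitary.coe_mul_star_self ((hHerm n).eigenvectorUnitary)
  simpa [Ue] using this

lemma hU2 : star (Ue n) * Ue n = 1 := by
  have := Unitary.coe_star_mul_self ((hHerm n).eigenvectorUnitary)
  simpa [Ue] using this

lemma spec : Am n = Ue n * Matrix.diagonal (eig n) * star (Ue n) := by
  have h := (hHerm n).spectral_theorem
  have h2 : (RCLike.ofReal ∘ (hHerm n).eigenvalues : V n → ℝ) = eig n := by
    funext i; simp [eig]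
  rw [h2] at h
  exact h

lemma conj_mul (P Q : Matrix (V n) (V n) ℝ) :
    (Ue n * P * star (Ue n)) * (Ue n * Q * star (Ue n)) = Ue n * (P * Q) * star (Ue n) := by
  have : star (Ue n) * (Ue n * Q * star (Ue n)) = Q * star (Ue n) := by
    rw [← mul_assoc, ← mul_assoc, hU2, one_mul]
  rw [mul_assoc (Ue n * P), this, ← mul_assoc, mul_assoc (Ue n)]

lemma conj_shift (c : ℝ) :
    Am n - c • 1 = Ue n * Matrix.diagonal (fun j => eig n j - c) * star (Ue n) := by
  have h1 : Matrix.diagonal (fun j => eig n j - c)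
      = Matrix.diagonal (eig n) - c • 1 := by
    rw [Matrix.smul_one_eq_diagonal, Matrix.diagonal_sub]
  rw [h1, mul_sub, sub_mul, ← spec, Matrix.mul_smul, Matrix.smul_mul, mul_one, hU1]

lemma conj_trace (P : Matrix (V n) (V n) ℝ) : (Ue n * P * star (Ue n)).trace = P.trace := by
  rw [Matrix.trace_mul_cycle, hU2, one_mul]

lemma eig_sum1 : ∑ i : V n, eig n i = 0 := by
  have h := congrArg Matrix.trace (spec n)
  rw [trA, conj_trace, Matrix.trace_diagonal] at h
  exact h.symm

lemma eig_sum2 : ∑ i : V n, eig n i ^ 2 = (2*(n:ℝ)-4)*((n:ℝ)^2-n) := by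
  have h : Am n * Am n = Ue n * (Matrix.diagonal (eig n) * Matrix.diagonal (eig n)) * star (Ue n) := by
    rw [spec, conj_mul]
  have h2 := congrArg Matrix.trace h
  rw [trA2, conj_trace, Matrix.diagonal_mul_diagonal, Matrix.trace_diagonal] at h2
  rw [show (∑ i : V n, eig n i ^ 2) = ∑ i : V n, eig n i * eig n i from
    Finset.sum_congr rfl (fun i _ => by ring)]
  exact h2.symm

lemma eig_sum3 : ∑ i : V n, eig n i ^ 3 = (2*(n:ℝ)-4)*((n:ℝ)-3)*((n:ℝ)^2-n) := by
  have h : Am n * (Am n * Am n) = Ue n * (Matrix.diagonal (eig n) *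
      (Matrix.diagonal (eig n) * Matrix.diagonal (eig n))) * star (Ue n) := by
    nth_rewrite 1 [spec]
    nth_rewrite 1 [spec]
    nth_rewrite 1 [spec]
    rw [conj_mul, conj_mul]
  have h2 := congrArg Matrix.trace h
  rw [trA3, conj_trace, Matrix.diagonal_mul_diagonal, Matrix.diagonal_mul_diagonal,
    Matrix.trace_diagonal] at h2
  rw [show (∑ i : V n, eig n i ^ 3) = ∑ i : V n, eig n i * (eig n i * eig n i) from
    Finset.sum_congr rfl (fun i _ => by ring)]
  exact h2.symm

lemma conj_cancel (P : Matrix (V n) (V n) ℝ) (h : Ue n * P * star (Ue n) = 0) : P = 0 := by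
  calc P = star (Ue n) * (Ue n * P * star (Ue n)) * Ue n := by
        rw [← mul_assoc, ← mul_assoc, hU2, one_mul, mul_assoc, hU2, mul_one]
    _ = star (Ue n) * 0 * Ue n := by rw [h]
    _ = 0 := by rw [Matrix.mul_zero, Matrix.zero_mul]

lemma eig_root (i : V n) :
    (eig n i - (2*(n:ℝ)-4)) * ((eig n i - ((n:ℝ)-2)) * ((eig n i - ((n:ℝ)-4)) * (eig n i + 2))) = 0 := by
  have h4 : Am n + 2 • 1 = Am n - (-2 : ℝ) • 1 := by module
  have hprod := hp n
  rw [h4, conj_shift, conj_shift, conj_shift, conj_shift, conj_mul, conj_mul, conj_mul] at hprod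
  have hq : Matrix.diagonal (fun j => eig n j - (2*(n:ℝ)-4)) *
      (Matrix.diagonal (fun j => eig n j - ((n:ℝ)-2)) *
      (Matrix.diagonal (fun j => eig n j - ((n:ℝ)-4)) * Matrix.diagonal (fun j => eig n j - (-2)))) = 0 :=
    conj_cancel n _ hprod
  rw [Matrix.diagonal_mul_diagonal, Matrix.diagonal_mul_diagonal, Matrix.diagonal_mul_diagonal] at hq
  have := congrFun (congrFun hq i) i
  rw [Matrix.diagonal_apply_eq] at this
  simpa [sub_neg_eq_add] using this
lemma charmatrix_diag : charmatrix (Matrix.diagonal (eig n))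
    = Matrix.diagonal (fun i => (X : ℝ[X]) - C (eig n i)) := by
  ext i j
  by_cases h : i = j
  · subst h
    rw [charmatrix_apply_eq, Matrix.diagonal_apply_eq, Matrix.diagonal_apply_eq]
  · rw [charmatrix_apply_ne _ _ _ h, Matrix.diagonal_apply_ne _ h, Matrix.diagonal_apply_ne _ h,
      map_zero, neg_zero]

lemma charpoly_A : (Am n).charpoly = ∏ i : V n, ((X : ℝ[X]) - C (eig n i)) := by
  have hmm : charmatrix (Am n) = ((C : ℝ →+* ℝ[X]).mapMatrix (Ue n))
      * charmatrix (Matrix.diagonal (eig n)) * ((C : ℝ →+* ℝ[X]).mapMatrix (star (Ue n))) := by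
    rw [charmatrix, charmatrix, mul_sub, sub_mul]
    congr 1
    · -- UC * scalar X * sUC = scalar X
      rw [show (Matrix.scalar (V n)) (X : ℝ[X]) = (X : ℝ[X]) • 1 from by
          rw [Matrix.smul_one_eq_diagonal]; rfl]
      rw [Matrix.mul_smul, Matrix.smul_mul, mul_one, ← _root_.map_mul, hU1, _root_.map_one]
    · rw [spec, _root_.map_mul, _root_.map_mul]
  have hdet := congrArg Matrix.det hmm
  rw [Matrix.charpoly, hdet, Matrix.det_mul, Matrix.det_mul, mul_right_comm, ← Matrix.det_mul,
    ← _root_.map_mul (RingHom.mapMatrix (C : ℝ →+* ℝ[X])), hU1, _root_.map_one, Matrix.det_one,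
    one_mul, charmatrix_diag, Matrix.det_diagonal]

lemma hmem (hn : 3 ≤ n) (i : V n) : eig n i = 2*(n:ℝ)-4 ∨ eig n i = (n:ℝ)-2 ∨
    eig n i = (n:ℝ)-4 ∨ eig n i = -2 := by
  have h := eig_root n i
  rcases mul_eq_zero.mp h with h1 | h'
  · exact Or.inl (sub_eq_zero.mp h1)
  rcases mul_eq_zero.mp h' with h2 | h''
  · exact Or.inr (Or.inl (sub_eq_zero.mp h2))
  rcases mul_eq_zero.mp h'' with h3 | h4
  · exact Or.inr (Or.inr (Or.inl (sub_eq_zero.mp h3)))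
  · exact Or.inr (Or.inr (Or.inr (by linarith [h4] )))

lemma hsum (hn : 3 ≤ n) (g : ℝ → ℝ) :
    ∑ i : V n, g (eig n i)
      = ((Finset.univ.filter fun i : V n => eig n i = 2*(n:ℝ)-4).card : ℝ) * g (2*(n:ℝ)-4)
      + ((Finset.univ.filter fun i : V n => eig n i = (n:ℝ)-2).card : ℝ) * g ((n:ℝ)-2)
      + ((Finset.univ.filter fun i : V n => eig n i = (n:ℝ)-4).card : ℝ) * g ((n:ℝ)-4)
      + ((Finset.univ.filter fun i : V n => eig n i = -2).card : ℝ) * g (-2) := by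
  have hn' : (3:ℝ) ≤ (n:ℝ) := by exact_mod_cast hn
  have d12 : (2*(n:ℝ)-4) ≠ (n:ℝ)-2 := by intro h; linarith
  have d13 : (2*(n:ℝ)-4) ≠ (n:ℝ)-4 := by intro h; linarith
  have d14 : (2*(n:ℝ)-4) ≠ -2 := by intro h; linarith
  have d23 : ((n:ℝ)-2) ≠ (n:ℝ)-4 := by intro h; linarith
  have d24 : ((n:ℝ)-2) ≠ -2 := by intro h; linarith
  have d34 : ((n:ℝ)-4) ≠ -2 := by intro h; linarith
  have hpt : ∀ i : V n, g (eig n i)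
      = g (2*(n:ℝ)-4) * (if eig n i = 2*(n:ℝ)-4 then 1 else 0)
      + g ((n:ℝ)-2) * (if eig n i = (n:ℝ)-2 then 1 else 0)
      + g ((n:ℝ)-4) * (if eig n i = (n:ℝ)-4 then 1 else 0)
      + g (-2) * (if eig n i = -2 then 1 else 0) := by
    intro i
    rcases hmem n hn i with h | h | h | h <;> rw [h] <;>
      simp [d12, d13, d14, d23, d24, d34, d12.symm, d13.symm, d14.symm, d23.symm, d24.symm, d34.symm]
  rw [Finset.sum_congr rfl fun i _ => hpt i, Finset.sum_add_distrib, Finset.sum_add_distrib,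
    Finset.sum_add_distrib, ← Finset.mul_sum, ← Finset.mul_sum, ← Finset.mul_sum, ← Finset.mul_sum,
    Finset.sum_boole, Finset.sum_boole, Finset.sum_boole, Finset.sum_boole]
  ring
lemma mults (hn : 3 ≤ n) :
    (Finset.univ.filter fun i : V n => eig n i = 2*(n:ℝ)-4).card = 1 ∧
    (Finset.univ.filter fun i : V n => eig n i = (n:ℝ)-2).card = n - 1 ∧
    (Finset.univ.filter fun i : V n => eig n i = (n:ℝ)-4).card = n - 1 ∧
    (Finset.univ.filter fun i : V n => eig n i = -2).card = n^2 - 3*n + 1 := by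
  have hn' : (3:ℝ) ≤ (n:ℝ) := by exact_mod_cast hn
  set a := ((Finset.univ.filter fun i : V n => eig n i = 2*(n:ℝ)-4).card : ℝ) with ha
  set b := ((Finset.univ.filter fun i : V n => eig n i = (n:ℝ)-2).card : ℝ) with hb
  set c := ((Finset.univ.filter fun i : V n => eig n i = (n:ℝ)-4).card : ℝ) with hc
  set d := ((Finset.univ.filter fun i : V n => eig n i = -2).card : ℝ) with hd
  have e0 : a * 1 + b * 1 + c * 1 + d * 1 = (n:ℝ)^2 - n := by
    rw [← hsum n hn (fun _ => 1)]
    simp only [Finset.sum_const, Finset.card_univ, nsmul_eq_mul, mul_one]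
    exact card_V n
  have e1 : a * (2*(n:ℝ)-4) + b * ((n:ℝ)-2) + c * ((n:ℝ)-4) + d * (-2) = 0 := by
    rw [← hsum n hn (fun x => x)]
    exact eig_sum1 n
  have e2 : a * (2*(n:ℝ)-4)^2 + b * ((n:ℝ)-2)^2 + c * ((n:ℝ)-4)^2 + d * (-2)^2
      = (2*(n:ℝ)-4)*((n:ℝ)^2-n) := by
    rw [← hsum n hn (fun x => x^2)]
    exact eig_sum2 n
  have e3 : a * (2*(n:ℝ)-4)^3 + b * ((n:ℝ)-2)^3 + c * ((n:ℝ)-4)^3 + d * (-2)^3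
      = (2*(n:ℝ)-4)*((n:ℝ)-3)*((n:ℝ)^2-n) := by
    rw [← hsum n hn (fun x => x^3)]
    exact eig_sum3 n
  have hva : ((n:ℝ)-2) * (n:ℝ) * (2*(n:ℝ)-2) * (a - 1) = 0 := by
    linear_combination e3 + (8-2*(n:ℝ))*e2 + (20-10*(n:ℝ)+(n:ℝ)^2)*e1 + (16-12*(n:ℝ)+2*(n:ℝ)^2)*e0
  have hvb : (-2*(n:ℝ)) * ((n:ℝ)-2) * (b - ((n:ℝ)-1)) = 0 := by
    linear_combination e3 + (10-3*(n:ℝ))*e2 + (32-18*(n:ℝ)+2*(n:ℝ)^2)*e1 + (32-24*(n:ℝ)+4*(n:ℝ)^2)*e0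
  have hvc : (2*(n:ℝ)) * ((n:ℝ)-2) * (c - ((n:ℝ)-1)) = 0 := by
    linear_combination e3 + (8-3*(n:ℝ))*e2 + (20-14*(n:ℝ)+2*(n:ℝ)^2)*e1 + (16-16*(n:ℝ)+4*(n:ℝ)^2)*e0
  have hvd : (-2*(n:ℝ)) * ((n:ℝ)-1) * ((n:ℝ)-2) * (d - ((n:ℝ)^2-3*(n:ℝ)+1)) = 0 := by
    linear_combination e3 + (10-4*(n:ℝ))*e2 + (32-26*(n:ℝ)+5*(n:ℝ)^2)*e1
      + (32-40*(n:ℝ)+16*(n:ℝ)^2-2*(n:ℝ)^3)*e0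
  have hra : a = 1 := by
    have h1 : ((n:ℝ)-2) * (n:ℝ) * (2*(n:ℝ)-2) ≠ 0 := by
      apply mul_ne_zero (mul_ne_zero _ _) <;> intro h <;> [skip; skip; linarith] <;> linarith
    have := (mul_eq_zero.mp hva).resolve_left h1
    linarith [sub_eq_zero.mp this]
  have hrb : b = (n:ℝ) - 1 := by
    have h1 : (-2*(n:ℝ)) * ((n:ℝ)-2) ≠ 0 := by
      apply mul_ne_zero <;> intro h <;> linarith
    have := (mul_eq_zero.mp hvb).resolve_left h1
    linarith [sub_eq_zero.mp this]
  have hrc : c = (n:ℝ) - 1 := by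
    have h1 : (2*(n:ℝ)) * ((n:ℝ)-2) ≠ 0 := by
      apply mul_ne_zero <;> intro h <;> linarith
    have := (mul_eq_zero.mp hvc).resolve_left h1
    linarith [sub_eq_zero.mp this]
  have hrd : d = (n:ℝ)^2 - 3*(n:ℝ) + 1 := by
    have h1 : (-2*(n:ℝ)) * ((n:ℝ)-1) * ((n:ℝ)-2) ≠ 0 := by
      apply mul_ne_zero (mul_ne_zero _ _) <;> intro h <;> [skip; skip; linarith] <;> linarith
    have := (mul_eq_zero.mp hvd).resolve_left h1
    linarith [sub_eq_zero.mp this]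
  have h1n : 1 ≤ n := by omega
  have h3n : 3*n ≤ n^2 := by nlinarith
  refine ⟨?_, ?_, ?_, ?_⟩
  · exact_mod_cast ha ▸ hra
  · have : ((n - 1 : ℕ) : ℝ) = (n:ℝ) - 1 := by
      push_cast [Nat.cast_sub h1n]; ring
    exact_mod_cast hb ▸ (hrb.trans this.symm)
  · have : ((n - 1 : ℕ) : ℝ) = (n:ℝ) - 1 := by
      push_cast [Nat.cast_sub h1n]; ring
    exact_mod_cast hc ▸ (hrc.trans this.symm)
  · have : ((n^2 - 3*n + 1 : ℕ) : ℝ) = (n:ℝ)^2 - 3*(n:ℝ) + 1 := by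
      push_cast [Nat.cast_sub h3n]; ring
    exact_mod_cast hd ▸ (hrd.trans this.symm)
lemma charpoly_final (hn : 3 ≤ n) : (Am n).charpoly
    = (X - C (2*(n:ℝ)-4)) * (X - C ((n:ℝ)-2))^(n-1) * (X - C ((n:ℝ)-4))^(n-1)
      * (X + C 2)^(n^2-3*n+1) := by
  have hn' : (3:ℝ) ≤ (n:ℝ) := by exact_mod_cast hn
  have d12 : (2*(n:ℝ)-4) ≠ (n:ℝ)-2 := by intro h; linarith
  have d13 : (2*(n:ℝ)-4) ≠ (n:ℝ)-4 := by intro h; linarith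
  have d14 : (2*(n:ℝ)-4) ≠ -2 := by intro h; linarith
  have d23 : ((n:ℝ)-2) ≠ (n:ℝ)-4 := by intro h; linarith
  have d24 : ((n:ℝ)-2) ≠ -2 := by intro h; linarith
  have d34 : ((n:ℝ)-4) ≠ -2 := by intro h; linarith
  obtain ⟨ma, mb, mc, md⟩ := mults n hn
  rw [charpoly_A n]
  have f : V n → ℝ[X] := fun i => X - C (eig n i)
  rw [← Finset.prod_filter_mul_prod_filter_not Finset.univ (fun i : V n => eig n i = 2*(n:ℝ)-4)
      (fun i => X - C (eig n i))]
  rw [← Finset.prod_filter_mul_prod_filter_not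
      (Finset.univ.filter fun i : V n => ¬ eig n i = 2*(n:ℝ)-4) (fun i : V n => eig n i = (n:ℝ)-2)
      (fun i => X - C (eig n i))]
  rw [← Finset.prod_filter_mul_prod_filter_not
      ((Finset.univ.filter fun i : V n => ¬ eig n i = 2*(n:ℝ)-4).filter
        fun i : V n => ¬ eig n i = (n:ℝ)-2) (fun i : V n => eig n i = (n:ℝ)-4)
      (fun i => X - C (eig n i))]
  have hs2 : (Finset.univ.filter fun i : V n => ¬ eig n i = 2*(n:ℝ)-4).filter
      (fun i : V n => eig n i = (n:ℝ)-2) = Finset.univ.filter fun i : V n => eig n i = (n:ℝ)-2 := by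
    ext i
    simp only [Finset.mem_filter, Finset.mem_univ, true_and]
    exact ⟨fun h => h.2, fun h => ⟨fun h' => d12 (by rw [← h', h]), h⟩⟩
  have hs3 : ((Finset.univ.filter fun i : V n => ¬ eig n i = 2*(n:ℝ)-4).filter
      (fun i : V n => ¬ eig n i = (n:ℝ)-2)).filter (fun i : V n => eig n i = (n:ℝ)-4)
      = Finset.univ.filter fun i : V n => eig n i = (n:ℝ)-4 := by
    ext i
    simp only [Finset.mem_filter, Finset.mem_univ, true_and]
    refine ⟨fun h => h.2, fun h => ⟨⟨fun h' => d13 ?_, fun h' => d23 ?_⟩, h⟩⟩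
    · rw [← h', h]
    · rw [← h', h]
  have hs4 : ((Finset.univ.filter fun i : V n => ¬ eig n i = 2*(n:ℝ)-4).filter
      (fun i : V n => ¬ eig n i = (n:ℝ)-2)).filter (fun i : V n => ¬ eig n i = (n:ℝ)-4)
      = Finset.univ.filter fun i : V n => eig n i = -2 := by
    ext i
    simp only [Finset.mem_filter, Finset.mem_univ, true_and]
    constructor
    · rintro ⟨⟨h1, h2⟩, h3⟩
      rcases hmem n hn i with h | h | h | h
      · exact absurd h h1
      · exact absurd h h2
      · exact absurd h h3
      · exact h
    · intro h
      exact ⟨⟨fun h' => d14 (by rw [← h', h]), fun h' => d24 (by rw [← h', h])⟩,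
        fun h' => d34 (by rw [← h', h])⟩
  rw [hs2, hs3, hs4]
  have hc1 : ∀ (lam : ℝ) (m : ℕ), (Finset.univ.filter fun i : V n => eig n i = lam).card = m →
      ∏ i ∈ Finset.univ.filter fun i : V n => eig n i = lam, (X - C (eig n i))
        = (X - C lam) ^ m := by
    intro lam m hm
    rw [Finset.prod_congr rfl (fun i hi => by
      rw [(Finset.mem_filter.mp hi).2]), Finset.prod_const, hm]
  rw [hc1 _ 1 ma, hc1 _ (n-1) mb, hc1 _ (n-1) mc, hc1 _ (n^2-3*n+1) md]
  rw [show (X - C (-2 : ℝ)) = X + C 2 from by rw [map_neg, sub_neg_eq_add]]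
  ring
end AGaux

/-- For `n ≥ 3`, the eigenvalues of `A(n,2)` are `2n-4` (multiplicity `1`), `n-2`
(multiplicity `n-1`), `n-4` (multiplicity `n-1`) and `-2` (multiplicity `n²-3n+1`),
stated as a factorization of the characteristic polynomial of its adjacency matrix. -/
theorem arrangementGraph_two_eigenvalues (n : ℕ) (hn : 3 ≤ n) :
    ((arrangementGraph n 2).adjMatrix ℤ).charpoly =
      (X - C (2 * (n : ℤ) - 4)) * (X - C ((n : ℤ) - 2)) ^ (n - 1) *
        (X - C ((n : ℤ) - 4)) ^ (n - 1) * (X + C 2) ^ (n ^ 2 - 3 * n + 1) := by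
  apply Polynomial.map_injective (Int.castRingHom ℝ) Int.cast_injective
  rw [← Matrix.charpoly_map ((arrangementGraph n 2).adjMatrix ℤ) (Int.castRingHom ℝ)]
  have hmap : ((arrangementGraph n 2).adjMatrix ℤ).map (⇑(Int.castRingHom ℝ)) = AGaux.Am n := by
    ext v w
    simp [AGaux.Am, Matrix.map_apply, apply_ite]
  rw [hmap, AGaux.charpoly_final n hn]
  simp only [Polynomial.map_mul, Polynomial.map_pow, Polynomial.map_sub, Polynomial.map_add,
    Polynomial.map_X, Polynomial.map_C]
  have c1 : (Int.castRingHom ℝ) (2*(n:ℤ)-4) = 2*(n:ℝ)-4 := by rw [eq_intCast]; push_cast; ring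
  have c2 : (Int.castRingHom ℝ) ((n:ℤ)-2) = (n:ℝ)-2 := by rw [eq_intCast]; push_cast; ring
  have c3 : (Int.castRingHom ℝ) ((n:ℤ)-4) = (n:ℝ)-4 := by rw [eq_intCast]; push_cast; ring
  have c4 : (Int.castRingHom ℝ) (2:ℤ) = (2:ℝ) := by rw [eq_intCast]; push_cast; ring
  rw [c1, c2, c3, c4]
end

section
/- Partitioning the vertices of A(n,k) according to the image of each injection (two k-permutations are in the same cell iff they have the same image set) yields an equitable partition whose quotient matrix is the adjacency matrix of the Johnson graph J(n,k). In particular, if the images of π and ρ intersect in exactly k-1 elements then π has exactly one neighbor among the permutations of Im(ρ), and if |Im(π)∩Im(ρ)| < k-1 then π has no neighbor among the permutations of Im(ρ). -/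
attribute [local instance] Classical.propDecidable



/-- The partition of the vertices of `A(n,k)` by image sets is equitable with quotient
matrix the adjacency matrix of the Johnson graph `J(n,k)`: the number of neighbors of
`π` having the same image as `ρ` is `1` if `|Im π ∩ Im ρ| = k-1` and `0` otherwise
(in particular it is `0` whenever `|Im π ∩ Im ρ| < k-1`, and `0` within a cell). -/
theorem imagePartition_equitable_johnson (n k : ℕ) (hk : 1 ≤ k) (hkn : k ≤ n)
    (π ρ : {π : Fin k → Fin n // Function.Injective π}) :
    Nat.card {τ : {π : Fin k → Fin n // Function.Injective π} //
        (arrangementGraph n k).Adj π τ ∧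
          Finset.image τ.1 Finset.univ = Finset.image ρ.1 Finset.univ} =
      if (Finset.image π.1 Finset.univ ∩ Finset.image ρ.1 Finset.univ).card = k - 1
        then 1 else 0 := by
  classical
  set S := Finset.image π.1 Finset.univ with hSdef
  set T := Finset.image ρ.1 Finset.univ with hTdef
  have hScard : S.card = k := by
    rw [hSdef, Finset.card_image_of_injective _ π.2, Finset.card_univ, Fintype.card_fin]
  have hTcard : T.card = k := by
    rw [hTdef, Finset.card_image_of_injective _ ρ.2, Finset.card_univ, Fintype.card_fin]
  -- Key structural fact about any member of the counted set.
  have key : ∀ (τ : {π : Fin k → Fin n // Function.Injective π}),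
      (arrangementGraph n k).Adj π τ →
      Finset.image τ.1 Finset.univ = T →
      ∃ i : Fin k, (∀ j, j ≠ i → τ.1 j = π.1 j) ∧ π.1 i ∉ T ∧ τ.1 i ∈ T ∧ τ.1 i ∉ S ∧
        S ∩ T = S.erase (π.1 i) := by
    rintro τ ⟨i, hi, hu⟩ him
    have hoff : ∀ j, j ≠ i → τ.1 j = π.1 j := by
      intro j hj
      by_contra h
      exact hj (hu j fun h' => h h'.symm)
    have hτiT : τ.1 i ∈ T := by
      rw [← him]; exact Finset.mem_image_of_mem _ (Finset.mem_univ i)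
    have hτiS : τ.1 i ∉ S := by
      intro h
      obtain ⟨j, -, hj⟩ := Finset.mem_image.mp h
      by_cases hji : j = i
      · exact hi (hji ▸ hj)
      · have : τ.1 j = τ.1 i := (hoff j hji).trans hj
        exact hji (τ.2 this)
    have hinter : S ∩ T = S.erase (π.1 i) := by
      ext x
      simp only [Finset.mem_inter, Finset.mem_erase]
      constructor
      · rintro ⟨hxS, hxT⟩
        refine ⟨?_, hxS⟩
        rw [← him] at hxT
        obtain ⟨j, -, hj⟩ := Finset.mem_image.mp hxT
        by_cases hji : j = i
        · exact absurd (hj ▸ hxS) (hji ▸ hτiS)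
        · intro hx
          have : π.1 j = π.1 i := by rw [← hoff j hji, hj, hx]
          exact hji (π.2 this)
      · rintro ⟨hxne, hxS⟩
        refine ⟨hxS, ?_⟩
        obtain ⟨j, -, hj⟩ := Finset.mem_image.mp hxS
        have hji : j ≠ i := fun h => hxne (by rw [← hj, h])
        rw [← him]
        exact Finset.mem_image.mpr ⟨j, Finset.mem_univ j, (hoff j hji).trans hj⟩
    have hπiS : π.1 i ∈ S := Finset.mem_image_of_mem _ (Finset.mem_univ i)
    have hπiT : π.1 i ∉ T := by
      intro h
      have : π.1 i ∈ S.erase (π.1 i) := hinter ▸ Finset.mem_inter.mpr ⟨hπiS, h⟩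
      exact (Finset.mem_erase.mp this).1 rfl
    exact ⟨i, hoff, hπiT, hτiT, hτiS, hinter⟩
  by_cases hcase : (S ∩ T).card = k - 1
  · rw [if_pos hcase]
    -- single-element difference
    have hπiS : ∀ i, π.1 i ∈ S := fun i => Finset.mem_image_of_mem _ (Finset.mem_univ i)
    have hsd : (S \ T).card = 1 := by
      have := Finset.card_sdiff_add_card_inter S T
      omega
    have htd : (T \ S).card = 1 := by
      have h1 := Finset.card_sdiff_add_card_inter T S
      rw [Finset.inter_comm] at h1
      omega
    obtain ⟨a, ha⟩ := Finset.card_eq_one.mp hsd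
    obtain ⟨b, hb⟩ := Finset.card_eq_one.mp htd
    have haS : a ∈ S ∧ a ∉ T := by
      have : a ∈ S \ T := ha ▸ Finset.mem_singleton_self a
      exact Finset.mem_sdiff.mp this
    have hbT : b ∈ T ∧ b ∉ S := by
      have : b ∈ T \ S := hb ▸ Finset.mem_singleton_self b
      exact Finset.mem_sdiff.mp this
    obtain ⟨i₀, -, hi₀⟩ := Finset.mem_image.mp haS.1
    -- the unique neighbor
    have hinj : Function.Injective (Function.update π.1 i₀ b) := by
      intro x y hxy
      by_cases hx : x = i₀ <;> by_cases hy : y = i₀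
      · rw [hx, hy]
      · rw [hx, Function.update_self, Function.update_of_ne hy] at hxy
        exact absurd (hxy ▸ hπiS y) hbT.2
      · rw [hy, Function.update_self, Function.update_of_ne hx] at hxy
        exact absurd (hxy ▸ hπiS x) hbT.2
      · rw [Function.update_of_ne hx, Function.update_of_ne hy] at hxy
        exact π.2 hxy
    set τ₀ : {π : Fin k → Fin n // Function.Injective π} := ⟨Function.update π.1 i₀ b, hinj⟩
      with hτ₀def
    have hτ₀im : Finset.image τ₀.1 Finset.univ = T := by
      ext x
      constructor
      · intro hx
        obtain ⟨j, -, hj⟩ := Finset.mem_image.mp hx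
        by_cases hji : j = i₀
        · subst hji
          rw [hτ₀def] at hj
          simp only [Function.update_self] at hj
          exact hj ▸ hbT.1
        · have hj' : π.1 j = x := by
            rw [hτ₀def] at hj; simpa [Function.update_of_ne hji] using hj
          have hxS : x ∈ S := hj' ▸ hπiS j
          have hxa : x ≠ a := by
            intro h
            exact hji (π.2 (by rw [hj', h, hi₀]))
          by_contra hxT
          have : x ∈ S \ T := Finset.mem_sdiff.mpr ⟨hxS, hxT⟩
          rw [ha, Finset.mem_singleton] at this
          exact hxa this
      · intro hx
        by_cases hxb : x = b
        · refine Finset.mem_image.mpr ⟨i₀, Finset.mem_univ _, ?_⟩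
          rw [hτ₀def]; simp [hxb]
        · have hxS : x ∈ S := by
            by_contra h
            have : x ∈ T \ S := Finset.mem_sdiff.mpr ⟨hx, h⟩
            rw [hb, Finset.mem_singleton] at this
            exact hxb this
          obtain ⟨j, -, hj⟩ := Finset.mem_image.mp hxS
          have hji : j ≠ i₀ := by
            intro h
            rw [h, hi₀] at hj
            exact haS.2 (hj ▸ hx)
          refine Finset.mem_image.mpr ⟨j, Finset.mem_univ _, ?_⟩
          rw [hτ₀def]; simpa [Function.update_of_ne hji] using hj
    have hadj₀ : (arrangementGraph n k).Adj π τ₀ := by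
      refine ⟨i₀, ?_, ?_⟩
      · show π.1 i₀ ≠ τ₀.1 i₀
        rw [hτ₀def]
        simp only [Function.update_self]
        intro h
        exact haS.2 (hi₀ ▸ h ▸ hbT.1)
      · intro j hj
        by_contra hji
        apply hj
        rw [hτ₀def]
        simp [Function.update_of_ne hji]
    have huniq : ∀ τ : {π : Fin k → Fin n // Function.Injective π},
        (arrangementGraph n k).Adj π τ →
        Finset.image τ.1 Finset.univ = T → τ = τ₀ := by
      intro τ hadj him
      obtain ⟨i, hoff, hπiT, hτiT, hτiS, hinter⟩ := key τ hadj him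
      have hia : π.1 i = a := by
        have : π.1 i ∈ S \ T := Finset.mem_sdiff.mpr ⟨hπiS i, hπiT⟩
        rwa [ha, Finset.mem_singleton] at this
      have hii : i = i₀ := π.2 (by rw [hia, hi₀])
      have hτib : τ.1 i = b := by
        have : τ.1 i ∈ T \ S := Finset.mem_sdiff.mpr ⟨hτiT, hτiS⟩
        rwa [hb, Finset.mem_singleton] at this
      apply Subtype.ext
      funext j
      by_cases hj : j = i₀
      · rw [hj, hτ₀def]
        simp only [Function.update_self]
        rw [← hii, hτib]
      · rw [hτ₀def]
        simp only [Function.update_of_ne hj]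
        exact hoff j (hii ▸ hj)
    rw [Nat.card_eq_one_iff_unique]
    constructor
    · constructor
      intro ⟨x, hx1, hx2⟩ ⟨y, hy1, hy2⟩
      have := (huniq x hx1 hx2).trans (huniq y hy1 hy2).symm
      simpa using this
    · exact ⟨⟨τ₀, hadj₀, hτ₀im⟩⟩
  · rw [if_neg hcase]
    have : IsEmpty {τ : {π : Fin k → Fin n // Function.Injective π} //
        (arrangementGraph n k).Adj π τ ∧
          Finset.image τ.1 Finset.univ = T} := by
      constructor
      rintro ⟨τ, hadj, him⟩
      obtain ⟨i, -, -, -, -, hinter⟩ := key τ hadj him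
      apply hcase
      rw [hinter, Finset.card_erase_of_mem (Finset.mem_image_of_mem _ (Finset.mem_univ i)),
        hScard]
    exact Nat.card_of_isEmpty
end

section
/- For n ≥ 2k, the adjacency matrix A of the arrangement graph A(n,k) satisfies A = MᵀM - kI, where M is the inclusion matrix of (k-1)-cliques versus k-cliques of the graph H_{n,k}; consequently -k is the smallest eigenvalue of A(n,k) and its multiplicity is at least n(n-1)···(n-k+2)·(n-2k+1). -/
attribute [local instance] Classical.propDecidable

open Matrix

/-- The graph `H_{n,k}`: vertices `a_{ij} = (i,j)` for `i ∈ [k]`, `j ∈ [n]`, with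
`a_{ij} ~ a_{rs}` iff `i ≠ r` and `j ≠ s` (the complete multipartite graph `K_{n,…,n}`
minus the edges joining equal second indices). -/
def Hgraph (n k : ℕ) : SimpleGraph (Fin k × Fin n) where
  Adj p q := p.1 ≠ q.1 ∧ p.2 ≠ q.2
  symm := by constructor; rintro p q ⟨h1, h2⟩; exact ⟨h1.symm, h2.symm⟩
  loopless := by constructor; rintro p ⟨h, -⟩; exact h rfl

/-- The inclusion matrix of `(k-1)`-cliques versus `k`-cliques of `H_{n,k}`. -/
noncomputable def inclusionMatrix (n k : ℕ) :
    Matrix {D : Finset (Fin k × Fin n) // (Hgraph n k).IsNClique (k - 1) D}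
      {D : Finset (Fin k × Fin n) // (Hgraph n k).IsNClique k D} ℤ :=
  Matrix.of fun D E => if D.1 ⊆ E.1 then 1 else 0

lemma inclusion_entry (n m : ℕ)
    (E E' : {D : Finset (Fin (m+1) × Fin n) // (Hgraph n (m+1)).IsNClique (m+1) D}) :
    ((inclusionMatrix n (m+1))ᵀ * inclusionMatrix n (m+1)) E E'
      = (((E.1 ∩ E'.1).card.choose m : ℕ) : ℤ) := by
  rw [Matrix.mul_apply]
  have h1 : ∀ D : {D : Finset (Fin (m+1) × Fin n) // (Hgraph n (m+1)).IsNClique m D},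
      (inclusionMatrix n (m+1))ᵀ E D * inclusionMatrix n (m+1) D E'
        = if D.1 ⊆ E.1 ∧ D.1 ⊆ E'.1 then 1 else 0 := by
    intro D
    show (if D.1 ⊆ E.1 then (1:ℤ) else 0) * (if D.1 ⊆ E'.1 then 1 else 0) = _
    by_cases h : D.1 ⊆ E.1 <;> by_cases h' : D.1 ⊆ E'.1 <;> simp [h, h']
  show (∑ D : {D : Finset (Fin (m+1) × Fin n) // (Hgraph n (m+1)).IsNClique m D},
      (inclusionMatrix n (m+1))ᵀ E D * inclusionMatrix n (m+1) D E') = _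
  rw [Finset.sum_congr rfl fun D _ => h1 D, Finset.sum_boole]
  norm_cast
  rw [← Finset.card_powersetCard m (E.1 ∩ E'.1)]
  apply Finset.card_bij (fun D _ => D.1)
  · intro D hD
    simp only [Finset.mem_filter] at hD
    rw [Finset.mem_powersetCard]
    exact ⟨Finset.subset_inter hD.2.1 hD.2.2, D.2.2⟩
  · intro a _ b _ hab
    exact Subtype.ext hab
  · intro S hS
    rw [Finset.mem_powersetCard] at hS
    have hcl : (Hgraph n (m+1)).IsNClique m S := by
      refine ⟨E.2.1.subset ?_, hS.2⟩
      exact_mod_cast (hS.1.trans Finset.inter_subset_left)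
    refine ⟨⟨S, hcl⟩, ?_, rfl⟩
    simp only [Finset.mem_filter, Finset.mem_univ, true_and]
    exact Finset.subset_inter_iff.mp hS.1

lemma card_small_cliques_le (n m : ℕ) :
    Fintype.card {D : Finset (Fin (m+1) × Fin n) // (Hgraph n (m+1)).IsNClique m D}
      ≤ (m+1) * n.descFactorial m := by
  classical
  have key : ∀ D : {D : Finset (Fin (m+1) × Fin n) // (Hgraph n (m+1)).IsNClique m D},
      ∃ (i : Fin (m+1)) (f : Fin m → Fin n), Function.Injective f ∧
        D.1 = Finset.image (fun m' => (i.succAbove m', f m')) Finset.univ := by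
    intro D
    obtain ⟨hclique, hcard⟩ := D.2
    have hfst : ∀ p ∈ D.1, ∀ q ∈ D.1, p.1 = q.1 → p = q := by
      intro p hp q hq h
      by_contra hne
      exact (hclique hp hq hne).1 h
    have hsnd : ∀ p ∈ D.1, ∀ q ∈ D.1, p.2 = q.2 → p = q := by
      intro p hp q hq h
      by_contra hne
      exact (hclique hp hq hne).2 h
    have hfstinj : Set.InjOn Prod.fst (D.1 : Set _) := fun p hp q hq h => hfst p hp q hq h
    have hScard : (D.1.image Prod.fst).card = m := by
      rw [Finset.card_image_of_injOn hfstinj, hcard]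
    have hcompl : (Finset.univ \ D.1.image Prod.fst).card = 1 := by
      rw [Finset.card_sdiff_of_subset (Finset.subset_univ _), Finset.card_univ, Fintype.card_fin, hScard]
      omega
    obtain ⟨i, hi⟩ := Finset.card_eq_one.mp hcompl
    have hinotmem : i ∉ D.1.image Prod.fst := by
      have : i ∈ Finset.univ \ D.1.image Prod.fst := hi ▸ Finset.mem_singleton_self i
      exact (Finset.mem_sdiff.mp this).2
    have hmem : ∀ j : Fin (m+1), j ≠ i → j ∈ D.1.image Prod.fst := by
      intro j hj
      by_contra hjn
      have : j ∈ Finset.univ \ D.1.image Prod.fst :=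
        Finset.mem_sdiff.mpr ⟨Finset.mem_univ _, hjn⟩
      rw [hi] at this
      exact hj (Finset.mem_singleton.mp this)
    have hex : ∀ m' : Fin m, ∃! p, p ∈ D.1 ∧ p.1 = i.succAbove m' := by
      intro m'
      obtain ⟨p, hp, hp1⟩ := Finset.mem_image.mp (hmem _ (Fin.succAbove_ne i m'))
      exact ⟨p, ⟨hp, hp1⟩, fun q ⟨hq, hq1⟩ => hfst q hq p hp (by rw [hq1, hp1])⟩
    refine ⟨i, fun m' => (Finset.choose _ D.1 (hex m')).2, ?_, ?_⟩
    · intro a b hab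
      have ha := Finset.choose_mem _ D.1 (hex a)
      have hb := Finset.choose_mem _ D.1 (hex b)
      have hcc : Finset.choose _ D.1 (hex a) = Finset.choose _ D.1 (hex b) :=
        hsnd _ ha _ hb hab
      have h1 := Finset.choose_property _ D.1 (hex a)
      have h2 := Finset.choose_property _ D.1 (hex b)
      rw [hcc, h2] at h1
      exact Fin.succAbove_right_injective h1.symm
    · ext p
      simp only [Finset.mem_image, Finset.mem_univ, true_and]
      constructor
      · intro hp
        have hp1 : p.1 ≠ i := by
          intro h
          exact hinotmem (h ▸ Finset.mem_image_of_mem _ hp)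
        obtain ⟨m', hm'⟩ := Fin.exists_succAbove_eq hp1
        refine ⟨m', ?_⟩
        have hcp : Finset.choose (fun q => q.1 = i.succAbove m') D.1 (hex m') = p :=
          (hex m').unique ⟨Finset.choose_mem _ D.1 (hex m'),
            Finset.choose_property _ D.1 (hex m')⟩ ⟨hp, hm'.symm⟩
        calc (i.succAbove m', (Finset.choose _ D.1 (hex m')).2)
            = ((Finset.choose (fun q => q.1 = i.succAbove m') D.1 (hex m')).1,
                (Finset.choose _ D.1 (hex m')).2) := by
              rw [Finset.choose_property _ D.1 (hex m')]
          _ = p := by rw [hcp]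
      · rintro ⟨m', rfl⟩
        have hmem' := Finset.choose_mem (fun q => q.1 = i.succAbove m') D.1 (hex m')
        have h1 := Finset.choose_property (fun q => q.1 = i.succAbove m') D.1 (hex m')
        have : (i.succAbove m', (Finset.choose (fun q => q.1 = i.succAbove m') D.1 (hex m')).2)
            = Finset.choose (fun q => q.1 = i.succAbove m') D.1 (hex m') := by
          rw [Prod.ext_iff]
          exact ⟨h1.symm, rfl⟩
        rw [this]
        exact hmem'
  choose i f hfinj hD using key
  have hinj : Function.Injective
      (fun D : {D : Finset (Fin (m+1) × Fin n) // (Hgraph n (m+1)).IsNClique m D} =>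
        ((i D), (⟨f D, hfinj D⟩ : Fin m ↪ Fin n))) := by
    intro D D' h
    simp only [Prod.mk.injEq] at h
    apply Subtype.ext
    rw [hD D, hD D', h.1]
    have hf : f D = f D' := congrArg (fun e : Fin m ↪ Fin n => (e : Fin m → Fin n)) h.2
    rw [hf]
  calc Fintype.card _ ≤ Fintype.card (Fin (m+1) × (Fin m ↪ Fin n)) :=
        Fintype.card_le_of_injective _ hinj
    _ = (m+1) * n.descFactorial m := by
        simp [Fintype.card_embedding_eq]

/-- For `n ≥ 2k`, under the canonical identification `c` of `k`-permutations with the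
`k`-cliques of `H_{n,k}`, the adjacency matrix `A` of `A(n,k)` satisfies
`A = MᵀM - kI` where `M` is the inclusion matrix of `(k-1)`-cliques versus `k`-cliques;
consequently `-k` is the smallest eigenvalue of `A(n,k)`, and its multiplicity is at
least `n(n-1)⋯(n-k+2)(n-2k+1)`. -/
theorem arrangementGraph_smallest_eigenvalue (n k : ℕ) (hk : 1 ≤ k) (hnk : 2 * k ≤ n)
    (c : {π : Fin k → Fin n // Function.Injective π} ≃
        {D : Finset (Fin k × Fin n) // (Hgraph n k).IsNClique k D})
    (hc : ∀ π, (c π).1 = Finset.univ.image fun i => (i, π.1 i)) :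
    (∀ π ρ, (arrangementGraph n k).adjMatrix ℤ π ρ =
        ((inclusionMatrix n k)ᵀ * inclusionMatrix n k) (c π) (c ρ) -
          if π = ρ then (k : ℤ) else 0) ∧
      (∀ μ ∈ spectrum ℝ ((arrangementGraph n k).adjMatrix ℝ), -(k : ℝ) ≤ μ) ∧
      Module.End.HasEigenvalue
        (Matrix.toLin' ((arrangementGraph n k).adjMatrix ℝ)) (-(k : ℝ)) ∧
      n.descFactorial (k - 1) * (n - (2 * k - 1)) ≤
        Module.finrank ℝ
          (Module.End.eigenspace
            (Matrix.toLin' ((arrangementGraph n k).adjMatrix ℝ)) (-(k : ℝ))) := by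
  obtain ⟨m, rfl⟩ : ∃ m, k = m + 1 := ⟨k - 1, by omega⟩
  -- intersection of two k-cliques, as an image
  have hdiff : ∀ π ρ : {π : Fin (m+1) → Fin n // Function.Injective π},
      ((c π).1 ∩ (c ρ).1)
        = (Finset.univ.filter fun i => π.1 i = ρ.1 i).image (fun i => (i, π.1 i)) := by
    intro π ρ
    rw [hc, hc]
    ext p
    simp only [Finset.mem_inter, Finset.mem_image, Finset.mem_filter, Finset.mem_univ, true_and]
    constructor
    · rintro ⟨⟨a, rfl⟩, ⟨b, hb⟩⟩
      have h1 : b = a := congrArg Prod.fst hb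
      have h2 : ρ.1 b = π.1 a := congrArg Prod.snd hb
      subst h1
      exact ⟨b, h2.symm, rfl⟩
    · rintro ⟨a, ha, rfl⟩
      exact ⟨⟨a, rfl⟩, ⟨a, by rw [ha]⟩⟩
  have hdiffcard : ∀ π ρ : {π : Fin (m+1) → Fin n // Function.Injective π},
      ((c π).1 ∩ (c ρ).1).card = (Finset.univ.filter fun i => π.1 i = ρ.1 i).card := by
    intro π ρ
    rw [hdiff π ρ, Finset.card_image_of_injective]
    intro a b hab
    exact congrArg Prod.fst hab
  have hfiltercard : ∀ π ρ : {π : Fin (m+1) → Fin n // Function.Injective π},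
      (Finset.univ.filter fun i => π.1 i = ρ.1 i).card
        + (Finset.univ.filter fun i => ¬ π.1 i = ρ.1 i).card = m + 1 := by
    intro π ρ
    rw [Finset.card_filter_add_card_filter_not, Finset.card_univ, Fintype.card_fin]
  -- Part 1
  have part1 : ∀ π ρ, (arrangementGraph n (m+1)).adjMatrix ℤ π ρ =
      ((inclusionMatrix n (m+1))ᵀ * inclusionMatrix n (m+1)) (c π) (c ρ) -
        if π = ρ then ((m+1 : ℕ) : ℤ) else 0 := by
    intro π ρ
    rw [SimpleGraph.adjMatrix_apply, inclusion_entry n m (c π) (c ρ), hdiffcard π ρ]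
    by_cases heq : π = ρ
    · subst heq
      have h0 : (Finset.univ.filter fun i => π.1 i = π.1 i).card = m + 1 := by
        simp
      rw [if_pos rfl, if_neg ((arrangementGraph n (m+1)).irrefl), h0]
      have hch : (m+1).choose m = m + 1 := by
        have := Nat.choose_symm (n := m+1) (k := 1) (by omega)
        simp only [Nat.add_sub_cancel] at this
        rw [this, Nat.choose_one_right]
      rw [hch]
      push_cast
      ring
    · rw [if_neg heq]
      by_cases hadj : (arrangementGraph n (m+1)).Adj π ρ
      · rw [if_pos hadj]
        obtain ⟨i, hi, hu⟩ := hadj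
        have hne : (Finset.univ.filter fun j => ¬ π.1 j = ρ.1 j) = {i} := by
          ext j
          simp only [Finset.mem_filter, Finset.mem_univ, true_and, Finset.mem_singleton]
          exact ⟨fun h => hu j h, fun h => h ▸ hi⟩
        have hcm : (Finset.univ.filter fun i => π.1 i = ρ.1 i).card = m := by
          have := hfiltercard π ρ
          rw [hne, Finset.card_singleton] at this
          omega
        rw [hcm, Nat.choose_self]
        norm_num
      · rw [if_neg hadj]
        have hex2 : ∃ i, π.1 i ≠ ρ.1 i := by
          rw [← Function.ne_iff]
          exact fun h => heq (Subtype.ext h)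
        obtain ⟨i, hi⟩ := hex2
        have hj : ∃ j, (π.1 j ≠ ρ.1 j) ∧ j ≠ i := by
          by_contra h
          push_neg at h
          exact hadj ⟨i, hi, fun j hjj => h j hjj⟩
        obtain ⟨j, hj, hji⟩ := hj
        have h2 : 2 ≤ (Finset.univ.filter fun i => ¬ π.1 i = ρ.1 i).card := by
          have hsub : ({j, i} : Finset (Fin (m+1))) ⊆
              Finset.univ.filter fun i => ¬ π.1 i = ρ.1 i := by
            intro x hx
            simp only [Finset.mem_insert, Finset.mem_singleton] at hx
            simp only [Finset.mem_filter, Finset.mem_univ, true_and]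
            rcases hx with rfl | rfl
            · exact hj
            · exact hi
          calc 2 = ({j, i} : Finset (Fin (m+1))).card := (Finset.card_pair hji).symm
            _ ≤ _ := Finset.card_le_card hsub
        have hlt : (Finset.univ.filter fun i => π.1 i = ρ.1 i).card < m := by
          have := hfiltercard π ρ
          omega
        rw [Nat.choose_eq_zero_of_lt hlt]
        norm_num
  -- real matrices
  let MR := (inclusionMatrix n (m+1)).map (fun z : ℤ => (z : ℝ))
  let N : Matrix {D : Finset (Fin (m+1) × Fin n) // (Hgraph n (m+1)).IsNClique m D}
      {π : Fin (m+1) → Fin n // Function.Injective π} ℝ := MR.submatrix id c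
  have hNN : ∀ π ρ, (Nᵀ * N) π ρ
      = ((((inclusionMatrix n (m+1))ᵀ * inclusionMatrix n (m+1)) (c π) (c ρ) : ℤ) : ℝ) := by
    intro π ρ
    have h2 : (((inclusionMatrix n (m+1))ᵀ * inclusionMatrix n (m+1)) (c π) (c ρ)) =
        ∑ D : {D : Finset (Fin (m+1) × Fin n) // (Hgraph n (m+1)).IsNClique m D},
          (inclusionMatrix n (m+1))ᵀ (c π) D * inclusionMatrix n (m+1) D (c ρ) := by
      rw [Matrix.mul_apply]
      rfl
    rw [h2, Matrix.mul_apply]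
    push_cast
    rfl
  have hmatR : (arrangementGraph n (m+1)).adjMatrix ℝ = Nᵀ * N - ((m+1 : ℕ) : ℝ) • 1 := by
    ext π ρ
    rw [Matrix.sub_apply, hNN π ρ, Matrix.smul_apply, Matrix.one_apply]
    have h := part1 π ρ
    set X := ((inclusionMatrix n (m+1))ᵀ * inclusionMatrix n (m+1)) (c π) (c ρ) with hX
    by_cases heq : π = ρ
    · subst heq
      rw [if_pos rfl] at h
      simp only [SimpleGraph.adjMatrix_apply,
        if_neg ((arrangementGraph n (m+1)).irrefl)] at h ⊢
      have hX1 : X = ((m+1:ℕ) : ℤ) := by omega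
      rw [if_true, smul_eq_mul, hX1]
      push_cast
      ring
    · rw [if_neg heq] at h
      rw [if_neg heq]
      simp only [SimpleGraph.adjMatrix_apply] at h ⊢
      by_cases hadj : (arrangementGraph n (m+1)).Adj π ρ
      · rw [if_pos hadj] at h ⊢
        have hX1 : X = 1 := by omega
        rw [hX1]
        simp
      · rw [if_neg hadj] at h ⊢
        have hX1 : X = 0 := by omega
        rw [hX1]
        simp
  have hquad : ∀ v, v ⬝ᵥ ((Nᵀ * N) *ᵥ v) = (N *ᵥ v) ⬝ᵥ (N *ᵥ v) := by
    intro v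
    rw [← Matrix.mulVec_mulVec, Matrix.dotProduct_mulVec, Matrix.vecMul_transpose]
  have hdotnn : ∀ (ι : Type) (_ : Fintype ι) (w : ι → ℝ), 0 ≤ w ⬝ᵥ w := by
    intro ι _ w
    exact Finset.sum_nonneg fun i _ => mul_self_nonneg _
  have hspec : ∀ μ ∈ spectrum ℝ ((arrangementGraph n (m+1)).adjMatrix ℝ),
      -((m+1 : ℕ) : ℝ) ≤ μ := by
    intro μ hμ
    rw [spectrum.mem_iff, Matrix.isUnit_iff_isUnit_det, isUnit_iff_ne_zero, not_not] at hμ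
    obtain ⟨v, hv0, hv⟩ := Matrix.exists_mulVec_eq_zero_iff.mpr hμ
    rw [Matrix.sub_mulVec, Algebra.algebraMap_eq_smul_one, Matrix.smul_mulVec,
      Matrix.one_mulVec, sub_eq_zero] at hv
    have hps : 0 < v ⬝ᵥ v := by
      rcases (hdotnn _ inferInstance v).lt_or_eq with h | h
      · exact h
      · exact absurd (dotProduct_self_eq_zero.mp h.symm) hv0
    have hkey : μ * (v ⬝ᵥ v) = (N *ᵥ v) ⬝ᵥ (N *ᵥ v) - ((m+1:ℕ):ℝ) * (v ⬝ᵥ v) := by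
      calc μ * (v ⬝ᵥ v) = v ⬝ᵥ (μ • v) := by rw [dotProduct_smul, smul_eq_mul]
        _ = v ⬝ᵥ ((arrangementGraph n (m+1)).adjMatrix ℝ *ᵥ v) := by rw [hv]
        _ = v ⬝ᵥ ((Nᵀ * N) *ᵥ v) - ((m+1:ℕ):ℝ) * (v ⬝ᵥ v) := by
            rw [hmatR, Matrix.sub_mulVec, Matrix.smul_mulVec, Matrix.one_mulVec,
              dotProduct_sub, dotProduct_smul, smul_eq_mul]
        _ = _ := by rw [hquad]
    nlinarith [hdotnn _ inferInstance (N *ᵥ v), hps]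
  have hkerle : LinearMap.ker N.mulVecLin ≤
      Module.End.eigenspace
        (Matrix.toLin' ((arrangementGraph n (m+1)).adjMatrix ℝ)) (-((m+1:ℕ):ℝ)) := by
    intro v hv
    rw [LinearMap.mem_ker, Matrix.mulVecLin_apply] at hv
    rw [Module.End.mem_eigenspace_iff, Matrix.toLin'_apply, hmatR, Matrix.sub_mulVec,
      ← Matrix.mulVec_mulVec, hv, Matrix.mulVec_zero, Matrix.smul_mulVec,
      Matrix.one_mulVec, zero_sub, neg_smul]
  have hcardperm : Fintype.card {π : Fin (m+1) → Fin n // Function.Injective π}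
      = n.descFactorial (m+1) := by
    rw [Fintype.card_congr (Equiv.subtypeInjectiveEquivEmbedding (Fin (m+1)) (Fin n)),
      Fintype.card_embedding_eq, Fintype.card_fin, Fintype.card_fin]
  have hrn := LinearMap.finrank_range_add_finrank_ker N.mulVecLin
  rw [Module.finrank_pi, hcardperm] at hrn
  have hrange : Module.finrank ℝ (LinearMap.range N.mulVecLin) ≤ (m+1) * n.descFactorial m := by
    have hrk : N.rank = Module.finrank ℝ (LinearMap.range N.mulVecLin) := rfl
    rw [← hrk]
    exact le_trans (Matrix.rank_le_card_height N) (card_small_cliques_le n m)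
  have hkerge : n.descFactorial m * (n - (2*(m+1) - 1))
      ≤ Module.finrank ℝ (LinearMap.ker N.mulVecLin) := by
    have harith : n.descFactorial m * (n - (2*(m+1) - 1))
        = n.descFactorial (m+1) - (m+1) * n.descFactorial m := by
      rw [Nat.descFactorial_succ, ← Nat.sub_mul, mul_comm]
      congr 1
      omega
    rw [harith]
    set a := n.descFactorial (m+1) with ha
    set b := (m+1) * n.descFactorial m with hb
    set r := Module.finrank ℝ (LinearMap.range N.mulVecLin) with hr
    set kk := Module.finrank ℝ (LinearMap.ker N.mulVecLin) with hkk
    omega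
  have hfinrank : n.descFactorial m * (n - (2*(m+1) - 1)) ≤
      Module.finrank ℝ (Module.End.eigenspace
        (Matrix.toLin' ((arrangementGraph n (m+1)).adjMatrix ℝ)) (-((m+1:ℕ):ℝ))) :=
    le_trans hkerge (Submodule.finrank_mono hkerle)
  have hpos : 0 < n.descFactorial m * (n - (2*(m+1) - 1)) := by
    apply Nat.mul_pos
    · refine Nat.pos_of_ne_zero fun h => ?_
      rw [Nat.descFactorial_eq_zero_iff_lt] at h
      omega
    · omega
  have heigen : Module.End.HasEigenvalue
      (Matrix.toLin' ((arrangementGraph n (m+1)).adjMatrix ℝ)) (-((m+1:ℕ):ℝ)) := by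
    rw [Module.End.hasEigenvalue_iff]
    intro hbot
    rw [hbot, finrank_bot] at hfinrank
    omega
  exact ⟨part1, hspec, heigen, hfinrank⟩
end
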